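/- arXiv:1401.7504 — 7 statements merged into one kernel-verified Lean document; each statement's English description precedes it below -/
import Mathlib

section
/- Let p₁, p₂, p₃, p₄ ∈ ℂ³ be null lifts with ⟨pᵢ,pⱼ⟩ ≠ 0 for all i ≠ j, and let 𝕏₁, 𝕏₂, 𝕏₃ be the associated cross-ratios. Then |𝕏₂| = |𝕏₁|·|𝕏₃| and 2·|𝕏₁|²·Re(𝕏₃) = |𝕏₁|² + |𝕏₂|² − 2·Re(𝕏₁) − 2·Re(𝕏₂) + 1; in particular (𝕏₁,𝕏₂,𝕏₃) ∈ 𝔛. -/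
noncomputable section

open Complex ComplexConjugate

/-- The Hermitian form of signature (2,1) on ℂ³:
`⟨z,w⟩ = z₁·conj(w₃) + z₂·conj(w₂) + z₃·conj(w₁)`. -/
def herm (z w : Fin 3 → ℂ) : ℂ :=
  z 0 * conj (w 2) + z 1 * conj (w 1) + z 2 * conj (w 0)

/-- A null lift: a nonzero vector with `⟨p,p⟩ = 0`. -/
def IsNullLift (p : Fin 3 → ℂ) : Prop := p ≠ 0 ∧ herm p p = 0

/-- The complex cross-ratio `𝕏(p,q,r,s) = (⟨r,p⟩·⟨s,q⟩)/(⟨s,p⟩·⟨r,q⟩)`. -/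
def crossRatio (p q r s : Fin 3 → ℂ) : ℂ :=
  (herm r p * herm s q) / (herm s p * herm r q)

/-- Membership in Falbel's cross-ratio variety 𝔛. -/
def memX (x₁ x₂ x₃ : ℂ) : Prop :=
  x₁ ≠ 0 ∧ x₂ ≠ 0 ∧ x₃ ≠ 0 ∧
  ‖x₂‖ = ‖x₁‖ * ‖x₃‖ ∧
  2 * (‖x₁‖) ^ 2 * x₃.re =
    (‖x₁‖) ^ 2 + (‖x₂‖) ^ 2 - 2 * x₁.re - 2 * x₂.re + 1

/-- Explicit expansion of the determinant of a 4×4 matrix. -/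
theorem det_fin_four' (M : Matrix (Fin 4) (Fin 4) ℂ) :
    M.det =
      M 0 0 * M 1 1 * M 2 2 * M 3 3 - M 0 0 * M 1 1 * M 2 3 * M 3 2 -
        M 0 0 * M 1 2 * M 2 1 * M 3 3 + M 0 0 * M 1 2 * M 2 3 * M 3 1 +
        M 0 0 * M 1 3 * M 2 1 * M 3 2 - M 0 0 * M 1 3 * M 2 2 * M 3 1 -
        M 0 1 * M 1 0 * M 2 2 * M 3 3 + M 0 1 * M 1 0 * M 2 3 * M 3 2 +
        M 0 1 * M 1 2 * M 2 0 * M 3 3 - M 0 1 * M 1 2 * M 2 3 * M 3 0 -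
        M 0 1 * M 1 3 * M 2 0 * M 3 2 + M 0 1 * M 1 3 * M 2 2 * M 3 0 +
        M 0 2 * M 1 0 * M 2 1 * M 3 3 - M 0 2 * M 1 0 * M 2 3 * M 3 1 -
        M 0 2 * M 1 1 * M 2 0 * M 3 3 + M 0 2 * M 1 1 * M 2 3 * M 3 0 +
        M 0 2 * M 1 3 * M 2 0 * M 3 1 - M 0 2 * M 1 3 * M 2 1 * M 3 0 -
        M 0 3 * M 1 0 * M 2 1 * M 3 2 + M 0 3 * M 1 0 * M 2 2 * M 3 1 +
        M 0 3 * M 1 1 * M 2 0 * M 3 2 - M 0 3 * M 1 1 * M 2 2 * M 3 0 -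
        M 0 3 * M 1 2 * M 2 0 * M 3 1 + M 0 3 * M 1 2 * M 2 1 * M 3 0 := by
  simp only [Matrix.det_succ_row_zero, Fin.sum_univ_succ, Matrix.det_fin_three, Matrix.submatrix_apply, Fin.succAbove]
  simp
  ring

/-- The form is Hermitian. -/
theorem herm_conj (z w : Fin 3 → ℂ) : herm z w = conj (herm w z) := by
  simp only [herm, map_add, map_mul, Complex.conj_conj]
  ring

/-- Linearity of `herm` in the first argument over finite sums. -/
theorem herm_sum (g : Fin 4 → ℂ) (p : Fin 4 → Fin 3 → ℂ) (w : Fin 3 → ℂ) :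
    herm (∑ j, g j • p j) w = ∑ j, g j * herm (p j) w := by
  simp only [herm, Finset.sum_apply, Pi.smul_apply, smul_eq_mul, Finset.sum_mul, mul_add]
  rw [← Finset.sum_add_distrib, ← Finset.sum_add_distrib]
  exact Finset.sum_congr rfl fun j _ => by ring

/-- Algebraic core: the determinant relation implies the complexified main identity. -/
theorem key_identity (a b c d e f a' b' c' d' e' f' : ℂ)
    (hb : b ≠ 0) (hc : c ≠ 0) (hd : d ≠ 0) (he : e ≠ 0)
    (hb' : b' ≠ 0) (hc' : c' ≠ 0) (hd' : d' ≠ 0) (he' : e' ≠ 0)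
    (hdet : a * a' * f * f' - a * d * f * c' - a * e * b' * f' -
      b * a' * f * e' + b * e * b' * e' - b * e * d' * c' -
      c * a' * d' * f' - c * d * b' * e' + c * d * d' * c' = 0) :
    (b * e / (c * d)) * (b' * e' / (c' * d')) *
          ((a' * f / (e * b')) + (a * f' / (e' * b))) =
        (b * e / (c * d)) * (b' * e' / (c' * d')) +
          (a * f / (c * d')) * (a' * f' / (c' * d)) -
          ((b * e / (c * d)) + (b' * e' / (c' * d'))) -
          ((a * f / (c * d')) + (a' * f' / (c' * d))) + 1 := by
  have hD : c * d * (c' * d') * (e * b' * (e' * b)) ≠ 0 :=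
    mul_ne_zero (mul_ne_zero (mul_ne_zero hc hd) (mul_ne_zero hc' hd'))
      (mul_ne_zero (mul_ne_zero he hb') (mul_ne_zero he' hb))
  apply mul_left_cancel₀ hD
  have h1 : c * d * (c' * d') * (e * b' * (e' * b)) *
      ((b * e / (c * d)) * (b' * e' / (c' * d')) * ((a' * f / (e * b')) + (a * f' / (e' * b)))) =
      (b * e * (b' * e')) * (a' * f * (e' * b) + a * f' * (e * b')) := by
    field_simp
  have e1 : c * d * (c' * d') * (e * b' * (e' * b)) * ((b * e / (c * d)) * (b' * e' / (c' * d'))) =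
      e * e' * b * b' * (b * e * (b' * e')) := by field_simp
  have e2 : c * d * (c' * d') * (e * b' * (e' * b)) * ((a * f / (c * d')) * (a' * f' / (c' * d))) =
      e * e' * b * b' * (a * f * (a' * f')) := by field_simp
  have e3 : c * d * (c' * d') * (e * b' * (e' * b)) * (b * e / (c * d)) =
      e * e' * b * b' * (b * e * (c' * d')) := by field_simp
  have e4 : c * d * (c' * d') * (e * b' * (e' * b)) * (b' * e' / (c' * d')) =
      e * e' * b * b' * (b' * e' * (c * d)) := by field_simp
  have e5 : c * d * (c' * d') * (e * b' * (e' * b)) * (a * f / (c * d')) =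
      e * e' * b * b' * (a * f * (c' * d)) := by field_simp
  have e6 : c * d * (c' * d') * (e * b' * (e' * b)) * (a' * f' / (c' * d)) =
      e * e' * b * b' * (a' * f' * (c * d')) := by field_simp
  have h2 : c * d * (c' * d') * (e * b' * (e' * b)) *
      ((b * e / (c * d)) * (b' * e' / (c' * d')) +
        (a * f / (c * d')) * (a' * f' / (c' * d)) -
        ((b * e / (c * d)) + (b' * e' / (c' * d'))) -
        ((a * f / (c * d')) + (a' * f' / (c' * d))) + 1) =
      e * e' * b * b' * (b * e * (b' * e')) + e * e' * b * b' * (a * f * (a' * f')) -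
        (e * e' * b * b' * (b * e * (c' * d')) + e * e' * b * b' * (b' * e' * (c * d))) -
        (e * e' * b * b' * (a * f * (c' * d)) + e * e' * b * b' * (a' * f' * (c * d'))) +
        c * d * (c' * d') * (e * b' * (e' * b)) := by
    rw [← e1, ← e2, ← e3, ← e4, ← e5, ← e6]; ring
  rw [h1, h2]
  linear_combination (-(e * e' * b * b')) * hdet

/-- The cross-ratios of a quadruple of null lifts with pairwise nonzero Hermitian
products satisfy the two defining equations of 𝔛; in particular
`(𝕏₁, 𝕏₂, 𝕏₃) ∈ 𝔛`. -/
theorem crossRatios_mem_X (p : Fin 4 → Fin 3 → ℂ)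
    (hnull : ∀ i, IsNullLift (p i))
    (hne : ∀ i j, i ≠ j → herm (p i) (p j) ≠ 0) :
    memX (crossRatio (p 0) (p 1) (p 2) (p 3))
         (crossRatio (p 0) (p 2) (p 1) (p 3))
         (crossRatio (p 1) (p 2) (p 0) (p 3)) := by
  -- abbreviations for the six independent Hermitian products
  set a := herm (p 1) (p 0) with hadef
  set b := herm (p 2) (p 0) with hbdef
  set c := herm (p 3) (p 0) with hcdef
  set d := herm (p 2) (p 1) with hddef
  set e := herm (p 3) (p 1) with hedef
  set f := herm (p 3) (p 2) with hfdef
  have ha : a ≠ 0 := hne 1 0 (by decide)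
  have hb : b ≠ 0 := hne 2 0 (by decide)
  have hc : c ≠ 0 := hne 3 0 (by decide)
  have hd : d ≠ 0 := hne 2 1 (by decide)
  have he : e ≠ 0 := hne 3 1 (by decide)
  have hf : f ≠ 0 := hne 3 2 (by decide)
  have ha' : conj a ≠ 0 := star_ne_zero.mpr ha
  have hb' : conj b ≠ 0 := star_ne_zero.mpr hb
  have hc' : conj c ≠ 0 := star_ne_zero.mpr hc
  have hd' : conj d ≠ 0 := star_ne_zero.mpr hd
  have he' : conj e ≠ 0 := star_ne_zero.mpr he
  have hf' : conj f ≠ 0 := star_ne_zero.mpr hf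
  -- conjugate-symmetric entries
  have s01 : herm (p 0) (p 1) = conj a := herm_conj _ _
  have s02 : herm (p 0) (p 2) = conj b := herm_conj _ _
  have s03 : herm (p 0) (p 3) = conj c := herm_conj _ _
  have s12 : herm (p 1) (p 2) = conj d := herm_conj _ _
  have s13 : herm (p 1) (p 3) = conj e := herm_conj _ _
  have s23 : herm (p 2) (p 3) = conj f := herm_conj _ _
  -- the four null lifts are linearly dependent
  obtain ⟨g, hg0, i0, hgi⟩ : ∃ g : Fin 4 → ℂ, ∑ i, g i • p i = 0 ∧ ∃ i, g i ≠ 0 := by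
    rw [← Fintype.not_linearIndependent_iff]
    intro h
    have := h.fintype_card_le_finrank
    simp [Module.finrank_fin_fun] at this
  have hgne : g ≠ 0 := fun h => hgi (congrFun h i0)
  -- the Gram matrix is singular
  set M : Matrix (Fin 4) (Fin 4) ℂ := Matrix.of (fun i j => herm (p j) (p i)) with hMdef
  have hmul : M.mulVec g = 0 := by
    funext i
    show ∑ j, M i j * g j = 0
    have : ∑ j, M i j * g j = herm (∑ j, g j • p j) (p i) := by
      rw [herm_sum]
      exact Finset.sum_congr rfl fun j _ => by rw [mul_comm]; rfl
    rw [this, hg0]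
    simp [herm]
  have hdet : M.det = 0 := Matrix.exists_mulVec_eq_zero_iff.mp ⟨g, hgne, hmul⟩
  rw [det_fin_four'] at hdet
  have E : ∀ i j, M i j = herm (p j) (p i) := fun i j => rfl
  simp only [E, (hnull 0).2, (hnull 1).2, (hnull 2).2, (hnull 3).2,
    s01, s02, s03, s12, s13, s23, ← hadef, ← hbdef, ← hcdef, ← hddef, ← hedef, ← hfdef,
    zero_mul, mul_zero, zero_add, add_zero, zero_sub, sub_zero, neg_zero] at hdet
  -- express the cross-ratios
  have hX1 : crossRatio (p 0) (p 1) (p 2) (p 3) = b * e / (c * d) := rfl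
  have hX2 : crossRatio (p 0) (p 2) (p 1) (p 3) = a * f / (c * conj d) := by
    rw [crossRatio, s12]
  have hX3 : crossRatio (p 1) (p 2) (p 0) (p 3) = conj a * f / (e * conj b) := by
    rw [crossRatio, s01, s02]
  rw [hX1, hX2, hX3]
  refine ⟨div_ne_zero (mul_ne_zero hb he) (mul_ne_zero hc hd),
    div_ne_zero (mul_ne_zero ha hf) (mul_ne_zero hc hd'),
    div_ne_zero (mul_ne_zero ha' hf) (mul_ne_zero he hb'), ?_, ?_⟩
  · simp only [norm_div, norm_mul, Complex.norm_conj]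
    rw [div_mul_div_comm, div_eq_div_iff
      (mul_ne_zero (norm_ne_zero_iff.mpr hc) (norm_ne_zero_iff.mpr hd))
      (mul_ne_zero (mul_ne_zero (norm_ne_zero_iff.mpr hc) (norm_ne_zero_iff.mpr hd))
        (mul_ne_zero (norm_ne_zero_iff.mpr he) (norm_ne_zero_iff.mpr hb)))]
    ring
  · -- the complexified main identity
    have hC : (b * e / (c * d)) * conj (b * e / (c * d)) *
          ((conj a * f / (e * conj b)) + conj (conj a * f / (e * conj b))) =
        (b * e / (c * d)) * conj (b * e / (c * d)) +
          (a * f / (c * conj d)) * conj (a * f / (c * conj d)) -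
          ((b * e / (c * d)) + conj (b * e / (c * d))) -
          ((a * f / (c * conj d)) + conj (a * f / (c * conj d))) + 1 := by
      simp only [map_div₀, map_mul, Complex.conj_conj]
      exact key_identity a b c d e f (conj a) (conj b) (conj c) (conj d) (conj e) (conj f)
        hb hc hd he hb' hc' hd' he' hdet
    rw [Complex.mul_conj, Complex.add_conj, Complex.add_conj, Complex.mul_conj,
      Complex.add_conj] at hC
    have hR : Complex.normSq (b * e / (c * d)) * (2 * (conj a * f / (e * conj b)).re) =
        Complex.normSq (b * e / (c * d)) + Complex.normSq (a * f / (c * conj d)) -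
          2 * (b * e / (c * d)).re - 2 * (a * f / (c * conj d)).re + 1 := by
      exact_mod_cast hC
    rw [Complex.sq_norm, Complex.sq_norm]
    linarith [hR]
end
end

section
/- For every (x₁,x₂,x₃) ∈ 𝔛 there exist null lifts p₁, p₂, p₃, p₄ ∈ ℂ³, pairwise non-proportional over ℂ and with ⟨pᵢ,pⱼ⟩ ≠ 0 for all i ≠ j, such that 𝕏₁ = x₁, 𝕏₂ = x₂ and 𝕏₃ = x₃. -/
noncomputable section

open Complex ComplexConjugate

lemma herm_explicit (a b c a' b' c' : ℂ) :
    herm ![a,b,c] ![a',b',c'] = a * conj c' + b * conj b' + c * conj a' := rfl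

lemma herm_smul (c : ℂ) (z w : Fin 3 → ℂ) : herm (c • z) w = c * herm z w := by
  simp [herm]; ring

/-- Every point of the cross-ratio variety 𝔛 is realized by a quadruple of
pairwise non-proportional null lifts with pairwise nonzero Hermitian products. -/
theorem exists_quadruple_of_mem_X (x₁ x₂ x₃ : ℂ) (hx : memX x₁ x₂ x₃) :
    ∃ p : Fin 4 → Fin 3 → ℂ,
      (∀ i, IsNullLift (p i)) ∧
      (∀ i j, i ≠ j → ∀ c : ℂ, p i ≠ c • p j) ∧
      (∀ i j, i ≠ j → herm (p i) (p j) ≠ 0) ∧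
      crossRatio (p 0) (p 1) (p 2) (p 3) = x₁ ∧
      crossRatio (p 0) (p 2) (p 1) (p 3) = x₂ ∧
      crossRatio (p 1) (p 2) (p 0) (p 3) = x₃ := by
  obtain ⟨h1, h2, h3, habs, hre⟩ := hx
  have h3c : conj x₃ ≠ 0 := fun h => h3 (by simpa using congrArg (starRingEnd ℂ) h)
  have h2c : conj x₂ ≠ 0 := fun h => h2 (by simpa using congrArg (starRingEnd ℂ) h)
  have h1c : conj x₁ ≠ 0 := fun h => h1 (by simpa using congrArg (starRingEnd ℂ) h)
  -- complex versions of the two defining equations of 𝔛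
  have e1 : x₂ * conj x₂ = x₁ * conj x₁ * (x₃ * conj x₃) := by
    rw [Complex.mul_conj, Complex.mul_conj, Complex.mul_conj]
    norm_cast
    rw [Complex.normSq_eq_norm_sq, Complex.normSq_eq_norm_sq, Complex.normSq_eq_norm_sq, habs]
    ring
  have e2 : x₁ * conj x₁ * (x₃ + conj x₃)
      = x₁ * conj x₁ + x₂ * conj x₂ - (x₁ + conj x₁) - (x₂ + conj x₂) + 1 := by
    simp only [Complex.mul_conj, Complex.add_conj]
    norm_cast
    rw [Complex.normSq_eq_norm_sq, Complex.normSq_eq_norm_sq]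
    nlinarith [hre]
  -- a square root δ of x₁ * conj x₃ / x₂, with |δ| = 1
  set μ : ℂ := x₁ * conj x₃ / x₂ with hμdef
  have hμ : μ ≠ 0 := div_ne_zero (mul_ne_zero h1 h3c) h2
  obtain ⟨δ, hδ⟩ : ∃ δ : ℂ, δ ^ 2 = μ :=
    ⟨μ ^ ((2 : ℕ) : ℂ)⁻¹, by exact_mod_cast Complex.cpow_nat_inv_pow μ two_ne_zero⟩
  have hδ0 : δ ≠ 0 := by
    intro h; rw [h] at hδ; exact hμ (by simpa using hδ.symm)
  have habsδ : ‖δ‖ = 1 := by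
    have hμ1 : ‖μ‖ = 1 := by
      rw [hμdef, norm_div, norm_mul, Complex.norm_conj, habs, div_self]
      exact mul_ne_zero (norm_ne_zero_iff.mpr h1) (norm_ne_zero_iff.mpr h3)
    have hsq : ‖δ‖ ^ 2 = 1 := by rw [← norm_pow, hδ, hμ1]
    have := Real.sqrt_sq (norm_nonneg δ)
    rw [← this, hsq, Real.sqrt_one]
  have hδδ : δ * conj δ = 1 := by
    rw [Complex.mul_conj, Complex.normSq_eq_norm_sq, habsδ]; norm_num
  have hδ2 : x₂ * δ ^ 2 = x₁ * conj x₃ := by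
    rw [hδ, hμdef]; field_simp
  have hδ2c : conj x₂ * (conj δ) ^ 2 = conj x₁ * x₃ := by
    have := congrArg (starRingEnd ℂ) hδ2
    simpa [map_mul, map_pow] using this
  -- key identity
  have hK' : (x₂ * conj x₂) * ((conj x₁ * δ * (x₃ - 1) - conj δ) * (x₁ * conj δ * (conj x₃ - 1) - δ))
      = (x₂ * conj x₂) * ((conj x₁ * δ + x₁ * conj δ) * (δ + conj δ)) := by
    linear_combination (x₂ * conj x₂ * (x₁ * conj x₁ * (x₃-1) * (conj x₃ - 1) + 1 - x₁ - conj x₁)) * hδδ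
      - (conj x₁ * x₃ * conj x₂) * hδ2 - (x₁ * conj x₃ * x₂) * hδ2c
      + (x₂ + conj x₂ - x₂ * conj x₂) * e1 - (x₂ * conj x₂) * e2
  set w : ℂ := conj x₁ * δ with hwdef
  set u' : ℂ := w * (x₃ - 1) - conj δ with hu'def
  have hcu' : conj u' = x₁ * conj δ * (conj x₃ - 1) - δ := by
    rw [hu'def, hwdef]; simp [map_mul, map_sub]
  have hK : u' * conj u' = (w + conj w) * (δ + conj δ) := by
    have hcw : conj w = x₁ * conj δ := by rw [hwdef]; simp [map_mul]
    apply mul_left_cancel₀ (mul_ne_zero h2 h2c)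
    rw [hcu', hcw, hu'def, hwdef]
    exact hK'
  have hKr : Complex.normSq u' = 4 * w.re * δ.re := by
    have h := hK
    rw [Complex.mul_conj, Complex.add_conj, Complex.add_conj] at h
    norm_cast at h
    linear_combination h
  -- choice of sign
  have hwδ : 0 ≤ w.re * δ.re := by nlinarith [Complex.normSq_nonneg u']
  set s : ℝ := if 0 ≤ δ.re + w.re then (-1 : ℝ) else 1 with hsdef
  have hs0 : s ≠ 0 := by rw [hsdef]; split <;> norm_num
  have hsA : s * w.re ≤ 0 := by
    rw [hsdef]; split <;> rename_i h <;> nlinarith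
  have hsB : s * δ.re ≤ 0 := by
    rw [hsdef]; split <;> rename_i h <;> nlinarith
  have hs0' : (s : ℂ) ≠ 0 := by exact_mod_cast hs0
  -- the construction
  set B : ℂ := (s : ℂ) * δ with hBdef
  set A : ℂ := conj x₁ * B with hAdef
  have hA0 : A ≠ 0 := mul_ne_zero h1c (mul_ne_zero hs0' hδ0)
  have hB0 : B ≠ 0 := mul_ne_zero hs0' hδ0
  have hcA : conj A = x₁ * conj B := by rw [hAdef]; simp [map_mul]
  have hcB : conj B = (s : ℂ) * conj δ := by
    rw [hBdef]; simp [map_mul, Complex.conj_ofReal]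
  have hcA0 : conj A ≠ 0 := fun h => hA0 (by simpa using congrArg (starRingEnd ℂ) h)
  have hcB0 : conj B ≠ 0 := fun h => hB0 (by simpa using congrArg (starRingEnd ℂ) h)
  have hAre : A.re = s * w.re := by
    rw [hAdef, hBdef, hwdef, show conj x₁ * ((s:ℂ) * δ) = (s:ℂ) * (conj x₁ * δ) by ring]
    exact Complex.re_ofReal_mul s _
  have hBre : B.re = s * δ.re := Complex.re_ofReal_mul s δ
  have hAre0 : A.re ≤ 0 := by rw [hAre]; exact hsA
  have hBre0 : B.re ≤ 0 := by rw [hBre]; exact hsB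
  set u : ℂ := A * (x₃ - 1) - conj B with hudef
  have hu : u = (s : ℂ) * u' := by
    rw [hudef, hu'def, hAdef, hBdef, hwdef]
    simp only [map_mul, Complex.conj_ofReal]
    ring
  have hcu : conj u = conj A * (conj x₃ - 1) - B := by
    rw [hudef]; simp [map_mul, map_sub]
  have hnu : Complex.normSq u = 4 * A.re * B.re := by
    rw [hu, map_mul, Complex.normSq_ofReal, hKr, hAre, hBre]; ring
  set b₂ : ℂ := (Real.sqrt (-(2 * B.re)) : ℂ) with hb2def
  set b₁ : ℂ := if B.re = 0 then (Real.sqrt (-(2 * A.re)) : ℂ) else u / b₂ with hb1def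
  have hnsb2 : Complex.normSq b₂ = -(2 * B.re) := by
    rw [hb2def, Complex.normSq_ofReal, Real.mul_self_sqrt (by linarith)]
  have hnsb1 : Complex.normSq b₁ = -(2 * A.re) := by
    rw [hb1def]; split <;> rename_i hbre
    · rw [Complex.normSq_ofReal, Real.mul_self_sqrt (by linarith)]
    · have hbrelt : B.re < 0 := lt_of_le_of_ne hBre0 hbre
      rw [Complex.normSq_div, hnu, hnsb2]
      field_simp
      ring
  have hb1sq : b₁ * conj b₁ = ((-(2 * A.re) : ℝ) : ℂ) := by
    rw [Complex.mul_conj, hnsb1]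
  have hb2sq : b₂ * conj b₂ = ((-(2 * B.re) : ℝ) : ℂ) := by
    rw [Complex.mul_conj, hnsb2]
  have hbu : b₁ * conj b₂ = u := by
    rw [hb1def]; split <;> rename_i hbre
    · have hu0 : u = 0 := by
        have : Complex.normSq u = 0 := by rw [hnu, hbre]; ring
        exact (Complex.normSq_eq_zero).mp this
      have hb20 : b₂ = 0 := by
        rw [hb2def, hbre]; norm_num
      rw [hb20, hu0, map_zero, mul_zero]
    · have hbrelt : B.re < 0 := lt_of_le_of_ne hBre0 hbre
      have hb2ne : b₂ ≠ 0 := by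
        rw [hb2def]
        exact_mod_cast (Real.sqrt_pos.mpr (by linarith)).ne'
      rw [hb2def, Complex.conj_ofReal, ← hb2def, div_mul_cancel₀ u hb2ne]
  have hbu' : b₂ * conj b₁ = conj u := by
    have := congrArg (starRingEnd ℂ) hbu
    simp only [map_mul, Complex.conj_conj] at this
    linear_combination this
  -- the quadruple
  set p : Fin 4 → Fin 3 → ℂ := ![![A,b₁,1], ![B,b₂,1], ![0,0,1], ![1,0,0]] with hpdef
  -- herm values
  have hA2 : A + conj A = 2 * (A.re : ℂ) := by rw [Complex.add_conj]; push_cast; ring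
  have hB2 : B + conj B = 2 * (B.re : ℂ) := by rw [Complex.add_conj]; push_cast; ring
  have v01 : herm ![A,b₁,1] ![B,b₂,1] = A * x₃ := by
    rw [herm_explicit, hbu, hudef]
    simp only [map_one, mul_one, one_mul]
    ring
  have v10 : herm ![B,b₂,1] ![A,b₁,1] = conj A * conj x₃ := by
    rw [herm_explicit, hbu', hcu]
    simp only [map_one, mul_one, one_mul]
    ring
  have v02 : herm ![A,b₁,1] ![(0:ℂ),0,1] = A := by
    rw [herm_explicit]; simp
  have v20 : herm ![(0:ℂ),0,1] ![A,b₁,1] = conj A := by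
    rw [herm_explicit]; simp
  have v12 : herm ![B,b₂,1] ![(0:ℂ),0,1] = B := by
    rw [herm_explicit]; simp
  have v21 : herm ![(0:ℂ),0,1] ![B,b₂,1] = conj B := by
    rw [herm_explicit]; simp
  have v03 : herm ![A,b₁,1] ![(1:ℂ),0,0] = 1 := by
    rw [herm_explicit]; simp
  have v30 : herm ![(1:ℂ),0,0] ![A,b₁,1] = 1 := by
    rw [herm_explicit]; simp
  have v13 : herm ![B,b₂,1] ![(1:ℂ),0,0] = 1 := by
    rw [herm_explicit]; simp
  have v31 : herm ![(1:ℂ),0,0] ![B,b₂,1] = 1 := by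
    rw [herm_explicit]; simp
  have v23 : herm ![(0:ℂ),0,1] ![(1:ℂ),0,0] = 1 := by
    rw [herm_explicit]; simp
  have v32 : herm ![(1:ℂ),0,0] ![(0:ℂ),0,1] = 1 := by
    rw [herm_explicit]; simp
  -- null lifts
  have hnull : ∀ i, IsNullLift (p i) := by
    intro i
    fin_cases i
    · refine ⟨fun h => ?_, ?_⟩
      · simpa [hpdef] using congrFun h 2
      · show herm ![A,b₁,1] ![A,b₁,1] = 0
        rw [herm_explicit, hb1sq]
        simp only [map_one, mul_one, one_mul]
        push_cast
        linear_combination hA2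
    · refine ⟨fun h => ?_, ?_⟩
      · simpa [hpdef] using congrFun h 2
      · show herm ![B,b₂,1] ![B,b₂,1] = 0
        rw [herm_explicit, hb2sq]
        simp only [map_one, mul_one, one_mul]
        push_cast
        linear_combination hB2
    · refine ⟨fun h => ?_, ?_⟩
      · simpa [hpdef] using congrFun h 2
      · show herm ![(0:ℂ),0,1] ![(0:ℂ),0,1] = 0
        rw [herm_explicit]; simp
    · refine ⟨fun h => ?_, ?_⟩
      · simpa [hpdef] using congrFun h 0
      · show herm ![(1:ℂ),0,0] ![(1:ℂ),0,0] = 0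
        rw [herm_explicit]; simp
  -- pairwise nonzero products
  have hnz : ∀ i j, i ≠ j → herm (p i) (p j) ≠ 0 := by
    have n01 : herm ![A,b₁,1] ![B,b₂,1] ≠ 0 := by rw [v01]; exact mul_ne_zero hA0 h3
    have n10 : herm ![B,b₂,1] ![A,b₁,1] ≠ 0 := by rw [v10]; exact mul_ne_zero hcA0 h3c
    have n02 : herm ![A,b₁,1] ![(0:ℂ),0,1] ≠ 0 := by rw [v02]; exact hA0
    have n20 : herm ![(0:ℂ),0,1] ![A,b₁,1] ≠ 0 := by rw [v20]; exact hcA0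
    have n12 : herm ![B,b₂,1] ![(0:ℂ),0,1] ≠ 0 := by rw [v12]; exact hB0
    have n21 : herm ![(0:ℂ),0,1] ![B,b₂,1] ≠ 0 := by rw [v21]; exact hcB0
    have n03 : herm ![A,b₁,1] ![(1:ℂ),0,0] ≠ 0 := by rw [v03]; exact one_ne_zero
    have n30 : herm ![(1:ℂ),0,0] ![A,b₁,1] ≠ 0 := by rw [v30]; exact one_ne_zero
    have n13 : herm ![B,b₂,1] ![(1:ℂ),0,0] ≠ 0 := by rw [v13]; exact one_ne_zero
    have n31 : herm ![(1:ℂ),0,0] ![B,b₂,1] ≠ 0 := by rw [v31]; exact one_ne_zero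
    have n23 : herm ![(0:ℂ),0,1] ![(1:ℂ),0,0] ≠ 0 := by rw [v23]; exact one_ne_zero
    have n32 : herm ![(1:ℂ),0,0] ![(0:ℂ),0,1] ≠ 0 := by rw [v32]; exact one_ne_zero
    intro i j hij
    fin_cases i <;> fin_cases j <;>
      first
        | exact absurd rfl hij
        | exact n01 | exact n10 | exact n02 | exact n20 | exact n12 | exact n21
        | exact n03 | exact n30 | exact n13 | exact n31 | exact n23 | exact n32
  refine ⟨p, hnull, ?_, hnz, ?_, ?_, ?_⟩
  · intro i j hij c hc
    apply hnz i j hij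
    rw [hc, herm_smul, (hnull j).2, mul_zero]
  · show crossRatio ![A,b₁,1] ![B,b₂,1] ![(0:ℂ),0,1] ![(1:ℂ),0,0] = x₁
    unfold crossRatio
    rw [v20, v31, v30, v21, hcA]
    field_simp
  · show crossRatio ![A,b₁,1] ![(0:ℂ),0,1] ![B,b₂,1] ![(1:ℂ),0,0] = x₂
    unfold crossRatio
    rw [v10, v32, v30, v12, hcA, hcB]
    rw [one_mul, mul_one, div_eq_iff hB0, hBdef]
    linear_combination (-(↑s * conj δ)) * hδ2 + (↑s * x₂ * δ) * hδδ
  · show crossRatio ![B,b₂,1] ![(0:ℂ),0,1] ![A,b₁,1] ![(1:ℂ),0,0] = x₃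
    unfold crossRatio
    rw [v01, v32, v31, v02]
    field_simp
end
end

section
/- Let (p₁,p₂,p₃,p₄) and (p'₁,p'₂,p'₃,p'₄) be quadruples of pairwise non-proportional null lifts with ⟨pᵢ,pⱼ⟩ ≠ 0 and ⟨p'ᵢ,p'ⱼ⟩ ≠ 0 for i ≠ j, and assume each quadruple spans ℂ³ (i.e. neither quadruple of boundary points lies on a single ℂ-circle). Then there exist a ℂ-linear bijection g : ℂ³ → ℂ³ satisfying ⟨g v, g w⟩ = ⟨v,w⟩ for all v,w ∈ ℂ³ and nonzero scalars λ₁,…,λ₄ ∈ ℂ with g pⱼ = λⱼ·p'ⱼ for j = 1,2,3,4, if and only if 𝕏ᵢ(p₁,p₂,p₃,p₄) = 𝕏ᵢ(p'₁,p'₂,p'₃,p'₄) for i = 1,2,3. -/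
noncomputable section

open Complex ComplexConjugate

/-! ### Auxiliary lemmas -/

def dete (x y z : Fin 3 → ℂ) : ℂ :=
  x 0 * (y 1 * z 2 - y 2 * z 1) - x 1 * (y 0 * z 2 - y 2 * z 0) + x 2 * (y 0 * z 1 - y 1 * z 0)

lemma conj_ne {z : ℂ} (h : z ≠ 0) : conj z ≠ 0 := by
  intro h0; exact h (by simpa using congrArg conj h0)

lemma herm_swap (x y : Fin 3 → ℂ) : herm y x = conj (herm x y) := by
  simp only [herm, map_add, map_mul, conj_conj]; ring

lemma herm_smul_smul (c d : ℂ) (x y : Fin 3 → ℂ) :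
    herm (c • x) (d • y) = c * conj d * herm x y := by
  simp only [herm, Pi.smul_apply, smul_eq_mul, map_mul]; ring

lemma gram_det' (x y z : Fin 3 → ℂ) :
    herm x y * herm y z * herm z x + herm y x * herm z y * herm x z
      = herm x x * herm y z * herm z y + herm y y * herm z x * herm x z
        + herm z z * herm x y * herm y x - herm x x * herm y y * herm z z
        - dete x y z * conj (dete x y z) := by
  simp only [herm, dete, map_add, map_mul, map_sub, conj_conj]
  ring

lemma gram_det (x y z : Fin 3 → ℂ) (hx : herm x x = 0) (hy : herm y y = 0) (hz : herm z z = 0) :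
    herm x y * herm y z * herm z x + conj (herm x y * herm y z * herm z x)
      = -(dete x y z * conj (dete x y z)) := by
  have h := gram_det' x y z
  rw [hx, hy, hz] at h
  rw [map_mul, map_mul, ← herm_swap, ← herm_swap, ← herm_swap]
  linear_combination h

lemma re_T (x y z : Fin 3 → ℂ) (hx : herm x x = 0) (hy : herm y y = 0) (hz : herm z z = 0) :
    2 * (herm x y * herm y z * herm z x).re = - Complex.normSq (dete x y z) := by
  have h := gram_det x y z hx hy hz
  rw [Complex.add_conj, Complex.mul_conj] at h
  exact_mod_cast h

lemma pos_aux {T T' : ℂ} (hT' : T' ≠ 0) (h1 : T.re < 0) (h2 : T'.re ≤ 0)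
    (h : (conj T * T').im = 0) : 0 < (conj T * T').re := by
  simp only [Complex.mul_im, Complex.mul_re, Complex.conj_re, Complex.conj_im] at h ⊢
  have h' : T.re * T'.im - T.im * T'.re = 0 := by linarith
  rcases (lt_or_eq_of_le h2) with h2' | h2'
  case inr =>
    exfalso
    have him : T'.im = 0 := by
      have h0 : T.re * T'.im = 0 := by rw [h2'] at h'; simpa using h'
      exact (mul_eq_zero.1 h0).resolve_left (ne_of_lt h1)
    exact hT' (Complex.ext h2' him)
  case inl =>
    have hp : 0 < T.re * T'.re := mul_pos_of_neg_of_neg h1 h2'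
    have key : T.re * T'.re * (T.re * T'.re + T.im * T'.im)
        = (T.re * T'.re)^2 + (T.im * T'.re)^2 := by
      linear_combination (T.im * T'.re) * h'
    nlinarith [key, hp, sq_nonneg (T.im * T'.re), sq_nonneg (T.re * T'.re)]

lemma nondeg (v : Fin 3 → ℂ) (h : ∀ w, herm v w = 0) : v = 0 := by
  funext i
  fin_cases i
  · simpa [herm] using h ![0,0,1]
  · simpa [herm] using h ![0,1,0]
  · simpa [herm] using h ![1,0,0]

lemma nondeg_span (v : Fin 3 → ℂ) (q : Fin 4 → Fin 3 → ℂ)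
    (hspan : Submodule.span ℂ (Set.range q) = ⊤)
    (h : ∀ j, herm v (q j) = 0) : v = 0 := by
  let K : Submodule ℂ (Fin 3 → ℂ) :=
    { carrier := {w | herm v w = 0}
      add_mem' := by
        intro a b ha hb
        simp only [Set.mem_setOf_eq] at *
        have : herm v (a + b) = herm v a + herm v b := by
          simp only [herm, Pi.add_apply, map_add]; ring
        rw [this, ha, hb, add_zero]
      zero_mem' := by simp [herm]
      smul_mem' := by
        intro c w hw
        simp only [Set.mem_setOf_eq] at *
        have : herm v (c • w) = conj c * herm v w := by
          simp only [herm, Pi.smul_apply, smul_eq_mul, map_mul]; ring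
        rw [this, hw, mul_zero] }
  have hK : Submodule.span ℂ (Set.range q) ≤ K :=
    Submodule.span_le.2 (by rintro _ ⟨j, rfl⟩; exact h j)
  apply nondeg
  intro w
  have hw : w ∈ K := hK (by rw [hspan]; trivial)
  exact hw

lemma herm_expand (x y : Fin 4 → ℂ) (u v : Fin 4 → Fin 3 → ℂ) :
    herm (∑ i, x i • u i) (∑ j, y j • v j)
      = ∑ i, ∑ j, x i * conj (y j) * herm (u i) (v j) := by
  simp only [herm, Finset.sum_apply, Pi.smul_apply, smul_eq_mul, map_sum, map_mul,
    Finset.sum_mul_sum, ← Finset.sum_add_distrib]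
  exact Finset.sum_congr rfl fun i _ => Finset.sum_congr rfl fun j _ => by ring

lemma herm_suml (x : Fin 4 → ℂ) (u : Fin 4 → Fin 3 → ℂ) (w : Fin 3 → ℂ) :
    herm (∑ i, x i • u i) w = ∑ i, x i * herm (u i) w := by
  simp only [herm, Finset.sum_apply, Pi.smul_apply, smul_eq_mul, Finset.sum_mul,
    ← Finset.sum_add_distrib]
  exact Finset.sum_congr rfl fun i _ => by ring

def mkF (p : Fin 4 → Fin 3 → ℂ) : (Fin 4 → ℂ) →ₗ[ℂ] (Fin 3 → ℂ) where
  toFun := fun c => ∑ i, c i • p i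
  map_add' := fun a b => by
    simp only [Pi.add_apply, add_smul, Finset.sum_add_distrib]
  map_smul' := fun c a => by
    simp only [Pi.smul_apply, smul_eq_mul, RingHom.id_apply, ← smul_smul, ← Finset.smul_sum]

lemma mkF_single (p : Fin 4 → Fin 3 → ℂ) (j : Fin 4) : mkF p (Pi.single j 1) = p j := by
  simp only [mkF, LinearMap.coe_mk, AddHom.coe_mk]
  rw [Finset.sum_eq_single j] <;> simp +contextual [Pi.single_apply]

lemma mkF_surj (p : Fin 4 → Fin 3 → ℂ) (hspan : Submodule.span ℂ (Set.range p) = ⊤) :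
    Function.Surjective (mkF p) := by
  rw [← LinearMap.range_eq_top, eq_top_iff, ← hspan]
  exact Submodule.span_le.2 (by rintro _ ⟨j, rfl⟩; exact ⟨Pi.single j 1, mkF_single p j⟩)

lemma exists_equiv (p q : Fin 4 → Fin 3 → ℂ)
    (hspan : Submodule.span ℂ (Set.range p) = ⊤)
    (hspanq : Submodule.span ℂ (Set.range q) = ⊤)
    (hgram : ∀ i j, herm (q i) (q j) = herm (p i) (p j)) :
    ∃ g : (Fin 3 → ℂ) ≃ₗ[ℂ] (Fin 3 → ℂ),
      (∀ v w, herm (g v) (g w) = herm v w) ∧ ∀ j, g (p j) = q j := by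
  have hsurj := mkF_surj p hspan
  have hsurj' := mkF_surj q hspanq
  have hker : LinearMap.ker (mkF p) = LinearMap.ker (mkF q) := by
    have crit : ∀ (r : Fin 4 → Fin 3 → ℂ), Submodule.span ℂ (Set.range r) = ⊤ →
        ∀ x : Fin 4 → ℂ, (mkF r x = 0 ↔ ∀ j, ∑ i, x i * herm (r i) (r j) = 0) := by
      intro r hr x
      constructor
      · intro h0 j
        have := herm_suml x r (r j)
        rw [show (∑ i, x i • r i) = mkF r x from rfl, h0] at this
        simp [herm] at this
        exact this.symm
      · intro hj
        apply nondeg_span _ r hr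
        intro j
        rw [show mkF r x = ∑ i, x i • r i from rfl, herm_suml]
        exact hj j
    ext x
    simp only [LinearMap.mem_ker]
    rw [crit p hspan x, crit q hspanq x]
    constructor
    · intro h j; simp only [hgram]; exact h j
    · intro h j; simp only [← hgram]; exact h j
  let e := (mkF p).quotKerEquivOfSurjective hsurj
  let e' := (mkF q).quotKerEquivOfSurjective hsurj'
  have he : ∀ x, e (Submodule.Quotient.mk x) = mkF p x := fun x => rfl
  have he' : ∀ x, e' (Submodule.Quotient.mk x) = mkF q x := fun x => rfl
  refine ⟨e.symm.trans ((Submodule.quotEquivOfEq _ _ hker).trans e'), ?_, ?_⟩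
  all_goals {
    have happ : ∀ x : Fin 4 → ℂ,
        (e.symm.trans ((Submodule.quotEquivOfEq _ _ hker).trans e')) (mkF p x) = mkF q x := by
      intro x
      have h1 : e.symm (mkF p x) = Submodule.Quotient.mk x := by
        rw [LinearEquiv.symm_apply_eq, he x]
      simp only [LinearEquiv.trans_apply, h1, Submodule.quotEquivOfEq_mk, he' x]
    first
    | · intro v w
        obtain ⟨x, rfl⟩ := hsurj v
        obtain ⟨y, rfl⟩ := hsurj w
        rw [happ x, happ y]
        rw [show mkF q x = ∑ i, x i • q i from rfl, show mkF q y = ∑ i, y i • q i from rfl,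
          show mkF p x = ∑ i, x i • p i from rfl, show mkF p y = ∑ i, y i • p i from rfl,
          herm_expand, herm_expand]
        exact Finset.sum_congr rfl fun i _ => Finset.sum_congr rfl fun j _ => by rw [hgram]
    | · intro j
        have := happ (Pi.single j 1)
        rwa [mkF_single, mkF_single] at this }

lemma rel_of_dete_eq_zero (x y z : Fin 3 → ℂ) (h : dete x y z = 0) :
    ∃ c : Fin 3 → ℂ, c ≠ 0 ∧ c 0 • x + c 1 • y + c 2 • z = 0 := by
  have hdet : (Matrix.of ![x, y, z]).det = 0 := by
    rw [Matrix.det_fin_three]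
    simp only [Matrix.of_apply, Matrix.cons_val', Matrix.cons_val_zero, Matrix.cons_val_one,
      Matrix.head_cons, Matrix.empty_val', Matrix.cons_val_fin_one, Matrix.head_fin_const,
      Matrix.cons_val_two, Matrix.tail_cons]
    rw [← h]; unfold dete; ring
  obtain ⟨c, hc0, hc⟩ := (Matrix.exists_vecMul_eq_zero_iff).mpr hdet
  refine ⟨c, hc0, ?_⟩
  funext j
  have h2 := congrFun hc j
  simp only [Matrix.vecMul, dotProduct, Fin.sum_univ_three, Matrix.of_apply,
    Matrix.cons_val', Matrix.cons_val_zero, Matrix.cons_val_one, Matrix.head_cons,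
    Matrix.empty_val', Matrix.cons_val_fin_one, Matrix.head_fin_const, Matrix.cons_val_two,
    Matrix.tail_cons, Pi.zero_apply] at h2
  simpa [smul_eq_mul] using h2

lemma not_both_zero {u v : Fin 3 → ℂ} (hv : v ≠ 0) (hprop : ∀ c : ℂ, u ≠ c • v)
    {a b : ℂ} (h : a • u + b • v = 0) : a = 0 ∧ b = 0 := by
  by_cases ha : a = 0
  · refine ⟨ha, ?_⟩
    rw [ha, zero_smul, zero_add] at h
    rcases smul_eq_zero.1 h with hb | hv'
    · exact hb
    · exact absurd hv' hv
  · exfalso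
    apply hprop (a⁻¹ * (-b))
    have h' : a • u = (-b) • v := by
      rw [neg_smul]
      exact eq_neg_of_add_eq_zero_left h
    rw [← smul_smul, ← h', smul_smul, inv_mul_cancel₀ ha, one_smul]

lemma mem_span2 {u v w : Fin 3 → ℂ} {a b c : ℂ} (ha : a ≠ 0)
    (h : a • w + b • u + c • v = 0) : w ∈ Submodule.span ℂ ({u, v} : Set (Fin 3 → ℂ)) := by
  rw [Submodule.mem_span_pair]
  refine ⟨a⁻¹ * (-b), a⁻¹ * (-c), ?_⟩
  have h' : a • w = (-b) • u + (-c) • v := by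
    rw [neg_smul, neg_smul]
    have := eq_neg_of_add_eq_zero_left (by rw [← add_assoc]; exact h : a • w + (b • u + c • v) = 0)
    rw [this]; abel
  rw [← smul_smul, ← smul_smul, ← smul_add, ← h', smul_smul, inv_mul_cancel₀ ha, one_smul]

lemma indep4 (p : Fin 4 → Fin 3 → ℂ) (h1 : p 1 ≠ 0)
    (hprop : ∀ c : ℂ, p 0 ≠ c • p 1)
    (hspan : Submodule.span ℂ (Set.range p) = ⊤)
    (hd : dete (p 0) (p 1) (p 2) = 0) : dete (p 3) (p 0) (p 1) ≠ 0 := by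
  intro h
  obtain ⟨b, hb0, hb⟩ := rel_of_dete_eq_zero _ _ _ hd
  obtain ⟨c, hc0, hc⟩ := rel_of_dete_eq_zero _ _ _ h
  have hb2 : b 2 ≠ 0 := by
    intro hb2
    rw [hb2, zero_smul, add_zero] at hb
    obtain ⟨e0, e1⟩ := not_both_zero h1 hprop hb
    exact hb0 (funext fun i => by fin_cases i <;> assumption)
  have hcz : c 0 ≠ 0 := by
    intro hcz
    rw [hcz, zero_smul, zero_add] at hc
    obtain ⟨e0, e1⟩ := not_both_zero h1 hprop hc
    exact hc0 (funext fun i => by fin_cases i <;> assumption)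
  have hp2 : p 2 ∈ Submodule.span ℂ ({p 0, p 1} : Set (Fin 3 → ℂ)) := by
    refine mem_span2 (b := b 0) (c := b 1) hb2 ?_
    rw [show b 2 • p 2 + b 0 • p 0 + b 1 • p 1 = b 0 • p 0 + b 1 • p 1 + b 2 • p 2 by abel]
    exact hb
  have hp3 : p 3 ∈ Submodule.span ℂ ({p 0, p 1} : Set (Fin 3 → ℂ)) :=
    mem_span2 (b := c 1) (c := c 2) hcz hc
  have hW : Submodule.span ℂ (Set.range p) ≤ Submodule.span ℂ ({p 0, p 1} : Set (Fin 3 → ℂ)) := by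
    rw [Submodule.span_le]
    rintro _ ⟨i, rfl⟩
    fin_cases i
    · exact Submodule.subset_span (by simp)
    · exact Submodule.subset_span (by simp)
    · exact hp2
    · exact hp3
  rw [hspan, top_le_iff] at hW
  have hcard : ({p 0, p 1} : Set (Fin 3 → ℂ)).toFinset.card ≤ 2 := by
    classical
    rw [Set.toFinset_insert, Set.toFinset_singleton]
    exact (Finset.card_insert_le _ _).trans (by simp)
  have hfr : Module.finrank ℂ (Submodule.span ℂ ({p 0, p 1} : Set (Fin 3 → ℂ))) ≤ 2 :=
    (finrank_span_le_card _).trans hcard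
  rw [hW] at hfr
  rw [finrank_top] at hfr
  rw [Module.finrank_fin_fun] at hfr
  omega

lemma helper_pair {ri rj S rij g' g : ℂ} (hS : S ≠ 0) (h1 : ri * rj = S * rij)
    (h2 : rij * g' = g) : ri * rj / S * g' = g := by
  rw [h1, mul_div_cancel_left₀ _ hS, h2]

/-- Two quadruples of null lifts in general position (each spanning ℂ³, i.e. not
lying on a common ℂ-circle) are equivalent under a Hermitian-form-preserving
linear bijection (up to nonzero scalars on lifts) if and only if they have the
same three cross-ratios. -/
theorem isometric_iff_crossRatios_eq (p p' : Fin 4 → Fin 3 → ℂ)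
    (hnull : ∀ i, IsNullLift (p i)) (hnull' : ∀ i, IsNullLift (p' i))
    (hprop : ∀ i j, i ≠ j → ∀ c : ℂ, p i ≠ c • p j)
    (hprop' : ∀ i j, i ≠ j → ∀ c : ℂ, p' i ≠ c • p' j)
    (hne : ∀ i j, i ≠ j → herm (p i) (p j) ≠ 0)
    (hne' : ∀ i j, i ≠ j → herm (p' i) (p' j) ≠ 0)
    (hspan : Submodule.span ℂ (Set.range p) = ⊤)
    (hspan' : Submodule.span ℂ (Set.range p') = ⊤) :
    (∃ g : (Fin 3 → ℂ) ≃ₗ[ℂ] (Fin 3 → ℂ),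
        (∀ v w, herm (g v) (g w) = herm v w) ∧
        ∃ lam : Fin 4 → ℂ, (∀ j, lam j ≠ 0) ∧ ∀ j, g (p j) = lam j • p' j) ↔
      (crossRatio (p 0) (p 1) (p 2) (p 3) = crossRatio (p' 0) (p' 1) (p' 2) (p' 3) ∧
       crossRatio (p 0) (p 2) (p 1) (p 3) = crossRatio (p' 0) (p' 2) (p' 1) (p' 3) ∧
       crossRatio (p 1) (p 2) (p 0) (p 3) = crossRatio (p' 1) (p' 2) (p' 0) (p' 3)) := by
  have h00 : herm (p 0) (p 0) = 0 := (hnull 0).2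
  have h11 : herm (p 1) (p 1) = 0 := (hnull 1).2
  have h22 : herm (p 2) (p 2) = 0 := (hnull 2).2
  have h33 : herm (p 3) (p 3) = 0 := (hnull 3).2
  have h00' : herm (p' 0) (p' 0) = 0 := (hnull' 0).2
  have h11' : herm (p' 1) (p' 1) = 0 := (hnull' 1).2
  have h22' : herm (p' 2) (p' 2) = 0 := (hnull' 2).2
  have h33' : herm (p' 3) (p' 3) = 0 := (hnull' 3).2
  constructor
  · rintro ⟨g, hpres, lam, hlam, hg⟩
    have hrel : ∀ i j, herm (p i) (p j) = lam i * conj (lam j) * herm (p' i) (p' j) := by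
      intro i j
      rw [← hpres (p i) (p j), hg i, hg j, herm_smul_smul]
    refine ⟨?_, ?_, ?_⟩
    · rw [crossRatio, crossRatio, hrel 2 0, hrel 3 1, hrel 3 0, hrel 2 1]
      rw [div_eq_div_iff
        (mul_ne_zero (mul_ne_zero (mul_ne_zero (hlam 3) (conj_ne (hlam 0))) (hne' 3 0 (by decide)))
          (mul_ne_zero (mul_ne_zero (hlam 2) (conj_ne (hlam 1))) (hne' 2 1 (by decide))))
        (mul_ne_zero (hne' 3 0 (by decide)) (hne' 2 1 (by decide)))]
      ring
    · rw [crossRatio, crossRatio, hrel 1 0, hrel 3 2, hrel 3 0, hrel 1 2]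
      rw [div_eq_div_iff
        (mul_ne_zero (mul_ne_zero (mul_ne_zero (hlam 3) (conj_ne (hlam 0))) (hne' 3 0 (by decide)))
          (mul_ne_zero (mul_ne_zero (hlam 1) (conj_ne (hlam 2))) (hne' 1 2 (by decide))))
        (mul_ne_zero (hne' 3 0 (by decide)) (hne' 1 2 (by decide)))]
      ring
    · rw [crossRatio, crossRatio, hrel 0 1, hrel 3 2, hrel 3 1, hrel 0 2]
      rw [div_eq_div_iff
        (mul_ne_zero (mul_ne_zero (mul_ne_zero (hlam 3) (conj_ne (hlam 1))) (hne' 3 1 (by decide)))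
          (mul_ne_zero (mul_ne_zero (hlam 0) (conj_ne (hlam 2))) (hne' 0 2 (by decide))))
        (mul_ne_zero (hne' 3 1 (by decide)) (hne' 0 2 (by decide)))]
      ring
  · rintro ⟨hX1, hX2, hX3⟩
    rw [crossRatio, crossRatio] at hX1 hX2 hX3
    rw [herm_swap (p 0) (p 2), herm_swap (p 1) (p 3), herm_swap (p 0) (p 3),
      herm_swap (p 1) (p 2), herm_swap (p' 0) (p' 2), herm_swap (p' 1) (p' 3),
      herm_swap (p' 0) (p' 3), herm_swap (p' 1) (p' 2)] at hX1
    rw [herm_swap (p 0) (p 1), herm_swap (p 2) (p 3), herm_swap (p 0) (p 3),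
      herm_swap (p' 0) (p' 1), herm_swap (p' 2) (p' 3), herm_swap (p' 0) (p' 3)] at hX2
    rw [herm_swap (p 2) (p 3), herm_swap (p 1) (p 3),
      herm_swap (p' 2) (p' 3), herm_swap (p' 1) (p' 3)] at hX3
    set a := herm (p 0) (p 1) with ha_def
    set b := herm (p 0) (p 2) with hb_def
    set c := herm (p 0) (p 3) with hc_def
    set d := herm (p 1) (p 2) with hd_def
    set e := herm (p 1) (p 3) with he_def
    set f := herm (p 2) (p 3) with hf_def
    set a' := herm (p' 0) (p' 1) with ha'_def
    set b' := herm (p' 0) (p' 2) with hb'_def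
    set c' := herm (p' 0) (p' 3) with hc'_def
    set d' := herm (p' 1) (p' 2) with hd'_def
    set e' := herm (p' 1) (p' 3) with he'_def
    set f' := herm (p' 2) (p' 3) with hf'_def
    have hna : a ≠ 0 := hne 0 1 (by decide)
    have hnb : b ≠ 0 := hne 0 2 (by decide)
    have hnc : c ≠ 0 := hne 0 3 (by decide)
    have hnd : d ≠ 0 := hne 1 2 (by decide)
    have hnee : e ≠ 0 := hne 1 3 (by decide)
    have hnf : f ≠ 0 := hne 2 3 (by decide)
    have hna' : a' ≠ 0 := hne' 0 1 (by decide)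
    have hnb' : b' ≠ 0 := hne' 0 2 (by decide)
    have hnc' : c' ≠ 0 := hne' 0 3 (by decide)
    have hnd' : d' ≠ 0 := hne' 1 2 (by decide)
    have hnee' : e' ≠ 0 := hne' 1 3 (by decide)
    have hnf' : f' ≠ 0 := hne' 2 3 (by decide)
    rw [div_eq_div_iff (mul_ne_zero (conj_ne hnc) (conj_ne hnd))
      (mul_ne_zero (conj_ne hnc') (conj_ne hnd'))] at hX1
    rw [div_eq_div_iff (mul_ne_zero (conj_ne hnc) hnd)
      (mul_ne_zero (conj_ne hnc') hnd')] at hX2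
    rw [div_eq_div_iff (mul_ne_zero (conj_ne hnee) hnb)
      (mul_ne_zero (conj_ne hnee') hnb')] at hX3
    have hX1g : b * e * (c' * d') = b' * e' * (c * d) := by
      have hh := congrArg conj hX1
      simp only [map_mul, conj_conj] at hh
      linear_combination hh
    set r1 := a / a' with hr1_def
    set r2 := b / b' with hr2_def
    set r3 := c / c' with hr3_def
    set r4 := d / d' with hr4_def
    set r5 := e / e' with hr5_def
    set r6 := f / f' with hr6_def
    have hnr1 : r1 ≠ 0 := div_ne_zero hna hna'
    have hnr2 : r2 ≠ 0 := div_ne_zero hnb hnb'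
    have hnr3 : r3 ≠ 0 := div_ne_zero hnc hnc'
    have hnr4 : r4 ≠ 0 := div_ne_zero hnd hnd'
    have hnr5 : r5 ≠ 0 := div_ne_zero hnee hnee'
    have hnr6 : r6 ≠ 0 := div_ne_zero hnf hnf'
    have hE1 : r2 * r5 = r3 * r4 := by
      rw [hr2_def, hr5_def, hr3_def, hr4_def, div_mul_div_comm, div_mul_div_comm,
        div_eq_div_iff (mul_ne_zero hnb' hnee') (mul_ne_zero hnc' hnd')]
      linear_combination hX1g
    have hE2 : conj r1 * conj r6 = conj r3 * r4 := by
      rw [hr1_def, hr6_def, hr3_def, hr4_def, map_div₀, map_div₀, map_div₀,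
        div_mul_div_comm, div_mul_div_comm,
        div_eq_div_iff (mul_ne_zero (conj_ne hna') (conj_ne hnf'))
          (mul_ne_zero (conj_ne hnc') hnd')]
      linear_combination hX2
    have hE3 : r1 * conj r6 = conj r5 * r2 := by
      rw [hr1_def, hr6_def, hr5_def, hr2_def, map_div₀, map_div₀,
        div_mul_div_comm, div_mul_div_comm,
        div_eq_div_iff (mul_ne_zero hna' (conj_ne hnf'))
          (mul_ne_zero (conj_ne hnee') hnb')]
      linear_combination hX3
    have hE1c : conj r2 * conj r5 = conj r3 * conj r4 := by
      have hh := congrArg conj hE1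
      simp only [map_mul] at hh
      exact hh
    have hE3c : conj r1 * r6 = r5 * conj r2 := by
      have hh := congrArg conj hE3
      simp only [map_mul, conj_conj] at hh
      exact hh
    have hA : conj r1 * r2 * conj r4 = r1 * conj r2 * r4 := by
      apply mul_right_cancel₀ (conj_ne hnr3)
      linear_combination (conj r2 * r1) * hE2 - (conj r2 * conj r1) * hE3 - (conj r1 * r2) * hE1c
    set s0 := conj r1 * r2 / r4 with hs0_def
    have hs0ne : s0 ≠ 0 := div_ne_zero (mul_ne_zero (conj_ne hnr1) hnr2) hnr4
    have hs0c : conj s0 = s0 := by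
      rw [hs0_def, map_div₀, map_mul, conj_conj,
        div_eq_div_iff (conj_ne hnr4) hnr4]
      linear_combination -hA
    have him : s0.im = 0 := by
      rw [← Complex.conj_eq_iff_im]; exact hs0c
    -- real parts of the two relevant triple products
    have hreT1 : 2 * (a * d * conj b).re = - Complex.normSq (dete (p 0) (p 1) (p 2)) := by
      have h := re_T (p 0) (p 1) (p 2) h00 h11 h22
      rw [herm_swap (p 0) (p 2), ← ha_def, ← hd_def, ← hb_def] at h
      exact h
    have hreT1' : 2 * (a' * d' * conj b').re = - Complex.normSq (dete (p' 0) (p' 1) (p' 2)) := by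
      have h := re_T (p' 0) (p' 1) (p' 2) h00' h11' h22'
      rw [herm_swap (p' 0) (p' 2), ← ha'_def, ← hd'_def, ← hb'_def] at h
      exact h
    have hT1ne : a * d * conj b ≠ 0 := mul_ne_zero (mul_ne_zero hna hnd) (conj_ne hnb)
    have hT1'ne : a' * d' * conj b' ≠ 0 := mul_ne_zero (mul_ne_zero hna' hnd') (conj_ne hnb')
    have hu_eq : conj (a * d * conj b) * (a' * d' * conj b')
        = s0 * ((conj a' * b' * d) * conj (conj a' * b' * d)) := by
      rw [hs0_def, hr1_def, hr2_def, hr4_def]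
      simp only [map_mul, map_div₀, conj_conj]
      field_simp [conj_ne hna', hnb', hnd, hnd']
    have him_u : (conj (a * d * conj b) * (a' * d' * conj b')).im = 0 := by
      rw [hu_eq, Complex.mul_conj]
      simp [Complex.mul_im, him]
    have hzne : conj a' * b' * d ≠ 0 := mul_ne_zero (mul_ne_zero (conj_ne hna') hnb') hnd
    have hM : 0 < Complex.normSq (conj a' * b' * d) := Complex.normSq_pos.2 hzne
    have hs0pos : 0 < s0.re := by
      by_cases hd1 : dete (p 0) (p 1) (p 2) = 0
      · by_cases hd1' : dete (p' 0) (p' 1) (p' 2) = 0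
        · -- degenerate case: use the triple (p 3, p 0, p 1)
          have hd4 : dete (p 3) (p 0) (p 1) ≠ 0 :=
            indep4 p (hnull 1).1 (hprop 0 1 (by decide)) hspan hd1
          have hd4' : dete (p' 3) (p' 0) (p' 1) ≠ 0 :=
            indep4 p' (hnull' 1).1 (hprop' 0 1 (by decide)) hspan' hd1'
          have hreT4 : 2 * (conj c * a * e).re = - Complex.normSq (dete (p 3) (p 0) (p 1)) := by
            have h := re_T (p 3) (p 0) (p 1) h33 h00 h11
            rw [herm_swap (p 0) (p 3), ← hc_def, ← ha_def, ← he_def] at h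
            exact h
          have hreT4' : 2 * (conj c' * a' * e').re
              = - Complex.normSq (dete (p' 3) (p' 0) (p' 1)) := by
            have h := re_T (p' 3) (p' 0) (p' 1) h33' h00' h11'
            rw [herm_swap (p' 0) (p' 3), ← hc'_def, ← ha'_def, ← he'_def] at h
            exact h
          have hlt4 : (conj c * a * e).re < 0 := by
            have := Complex.normSq_pos.2 hd4; linarith
          have hlt4' : (conj c' * a' * e').re < 0 := by
            have := Complex.normSq_pos.2 hd4'; linarith
          have hT4'ne : conj c' * a' * e' ≠ 0 :=
            mul_ne_zero (mul_ne_zero (conj_ne hnc') hna') hnee'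
          set s4 := r3 * conj r5 / r1 with hs4_def
          have hkey : conj r1 * r2 * conj r5 = conj r3 * r4 * r1 := by
            apply mul_right_cancel₀ (mul_ne_zero (conj_ne hnr2) (conj_ne hnr4))
            linear_combination (conj r2 * conj r5) * hA + (r1 * conj r2 * r4) * hE1c
          have hss4 : s0 * s4 = r3 * conj r3 := by
            rw [hs0_def, hs4_def]
            rw [div_mul_div_comm, div_eq_iff (mul_ne_zero hnr4 hnr1)]
            linear_combination r3 * hkey
          have hs4ne : s4 ≠ 0 := div_ne_zero (mul_ne_zero hnr3 (conj_ne hnr5)) hnr1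
          have hs4im : s4.im = 0 := by
            have h4 : s4 = (r3 * conj r3) / s0 := by
              rw [eq_div_iff hs0ne]; linear_combination hss4
            rw [h4, Complex.mul_conj]
            have hs0re_eq : s0 = ((s0.re : ℝ) : ℂ) := by
              apply Complex.ext <;> simp [him]
            rw [hs0re_eq, ← Complex.ofReal_div]
            simp
          have hu4_eq : conj (conj c * a * e) * (conj c' * a' * e')
              = s4 * ((c' * conj e' * a) * conj (c' * conj e' * a)) := by
            rw [hs4_def, hr3_def, hr5_def, hr1_def]
            simp only [map_mul, map_div₀, conj_conj]
            field_simp [conj_ne hnee', hnc', hna, hna']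
          have hu4im : (conj (conj c * a * e) * (conj c' * a' * e')).im = 0 := by
            rw [hu4_eq, Complex.mul_conj]
            simp [Complex.mul_im, hs4im]
          have hpos4 := pos_aux hT4'ne hlt4 hlt4'.le hu4im
          rw [hu4_eq, Complex.mul_conj] at hpos4
          have hz4ne : c' * conj e' * a ≠ 0 :=
            mul_ne_zero (mul_ne_zero hnc' (conj_ne hnee')) hna
          have hM4 : 0 < Complex.normSq (c' * conj e' * a) := Complex.normSq_pos.2 hz4ne
          simp only [Complex.mul_re, Complex.ofReal_re, Complex.ofReal_im, mul_zero,
            sub_zero] at hpos4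
          have hs4pos : 0 < s4.re := by
            rcases mul_pos_iff.1 hpos4 with ⟨h1, _⟩ | ⟨_, h2⟩
            · exact h1
            · linarith
          have hs4re_eq : s4 = ((s4.re : ℝ) : ℂ) := by
            apply Complex.ext <;> simp [hs4im]
          have hs4reC : ((s4.re : ℝ) : ℂ) ≠ 0 := Complex.ofReal_ne_zero.2 (ne_of_gt hs4pos)
          have hs0eq : s0 = ((Complex.normSq r3 / s4.re : ℝ) : ℂ) := by
            rw [Complex.ofReal_div, eq_div_iff hs4reC, ← hs4re_eq, ← Complex.mul_conj]
            exact hss4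
          rw [hs0eq, Complex.ofReal_re]
          exact div_pos (Complex.normSq_pos.2 hnr3) hs4pos
        · -- primed triple independent
          have hlt' : (a' * d' * conj b').re < 0 := by
            have := Complex.normSq_pos.2 hd1'; linarith
          have hle : (a * d * conj b).re ≤ 0 := by
            have := Complex.normSq_nonneg (dete (p 0) (p 1) (p 2)); linarith
          have him2 : (conj (a' * d' * conj b') * (a * d * conj b)).im = 0 := by
            have hrw : conj (a' * d' * conj b') * (a * d * conj b)
                = conj (conj (a * d * conj b) * (a' * d' * conj b')) := by
              simp only [map_mul, conj_conj]; ring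
            rw [hrw, Complex.conj_im, him_u, neg_zero]
          have hpos := pos_aux hT1ne hlt' hle him2
          have hswre : (conj (a' * d' * conj b') * (a * d * conj b)).re
              = (conj (a * d * conj b) * (a' * d' * conj b')).re := by
            simp only [Complex.mul_re, Complex.conj_re, Complex.conj_im]; ring
          rw [hswre, hu_eq, Complex.mul_conj] at hpos
          simp only [Complex.mul_re, Complex.ofReal_re, Complex.ofReal_im, mul_zero,
            sub_zero] at hpos
          rcases mul_pos_iff.1 hpos with ⟨h1, _⟩ | ⟨_, h2⟩
          · exact h1
          · linarith
      · -- p triple independent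
        have hlt : (a * d * conj b).re < 0 := by
          have := Complex.normSq_pos.2 hd1; linarith
        have hle' : (a' * d' * conj b').re ≤ 0 := by
          have := Complex.normSq_nonneg (dete (p' 0) (p' 1) (p' 2)); linarith
        have hpos := pos_aux hT1'ne hlt hle' him_u
        rw [hu_eq, Complex.mul_conj] at hpos
        simp only [Complex.mul_re, Complex.ofReal_re, Complex.ofReal_im, mul_zero,
          sub_zero] at hpos
        rcases mul_pos_iff.1 hpos with ⟨h1, _⟩ | ⟨_, h2⟩
        · exact h1
        · linarith
    -- construct the scalars
    have hs0re_eq : s0 = ((s0.re : ℝ) : ℂ) := by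
      apply Complex.ext <;> simp [him]
    have hs0reC : ((s0.re : ℝ) : ℂ) ≠ 0 := Complex.ofReal_ne_zero.2 (ne_of_gt hs0pos)
    set σ : ℂ := ((Real.sqrt s0.re : ℝ) : ℂ) with hσ_def
    have hσne : σ ≠ 0 := by
      rw [hσ_def]
      exact Complex.ofReal_ne_zero.2 (by positivity)
    have hσ2 : σ * σ = ((s0.re : ℝ) : ℂ) := by
      rw [hσ_def, ← Complex.ofReal_mul, Real.mul_self_sqrt hs0pos.le]
    have hσc : conj σ = σ := by rw [hσ_def]; exact Complex.conj_ofReal _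
    have hS1 : conj r1 * r2 = ((s0.re : ℝ) : ℂ) * r4 := by
      rw [← hs0re_eq, hs0_def, div_mul_cancel₀ _ hnr4]
    have hS2 : conj r1 * r3 = ((s0.re : ℝ) : ℂ) * r5 := by
      rw [← hs0re_eq, hs0_def, div_mul_eq_mul_div, eq_div_iff hnr4]
      linear_combination (-(conj r1)) * hE1
    have hS3 : conj r2 * r3 = ((s0.re : ℝ) : ℂ) * r6 := by
      rw [← hs0re_eq, hs0_def, div_mul_eq_mul_div, eq_div_iff hnr4]
      linear_combination (-(conj r2)) * hE1 - r2 * hE3c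
    have hS1c : conj r2 * r1 = ((s0.re : ℝ) : ℂ) * conj r4 := by
      have hh := congrArg conj hS1
      simp only [map_mul, conj_conj, Complex.conj_ofReal] at hh
      linear_combination hh
    have hS2c : conj r3 * r1 = ((s0.re : ℝ) : ℂ) * conj r5 := by
      have hh := congrArg conj hS2
      simp only [map_mul, conj_conj, Complex.conj_ofReal] at hh
      linear_combination hh
    have hS3c : conj r3 * r2 = ((s0.re : ℝ) : ℂ) * conj r6 := by
      have hh := congrArg conj hS3
      simp only [map_mul, conj_conj, Complex.conj_ofReal] at hh
      linear_combination hh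
    have hre1 : r1 * a' = a := by rw [hr1_def, div_mul_cancel₀ _ hna']
    have hre2 : r2 * b' = b := by rw [hr2_def, div_mul_cancel₀ _ hnb']
    have hre3 : r3 * c' = c := by rw [hr3_def, div_mul_cancel₀ _ hnc']
    have hre4 : r4 * d' = d := by rw [hr4_def, div_mul_cancel₀ _ hnd']
    have hre5 : r5 * e' = e := by rw [hr5_def, div_mul_cancel₀ _ hnee']
    have hre6 : r6 * f' = f := by rw [hr6_def, div_mul_cancel₀ _ hnf']
    have hre1c : conj r1 * conj a' = conj a := by
      have hh := congrArg conj hre1; simp only [map_mul] at hh; exact hh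
    have hre2c : conj r2 * conj b' = conj b := by
      have hh := congrArg conj hre2; simp only [map_mul] at hh; exact hh
    have hre3c : conj r3 * conj c' = conj c := by
      have hh := congrArg conj hre3; simp only [map_mul] at hh; exact hh
    have hre4c : conj r4 * conj d' = conj d := by
      have hh := congrArg conj hre4; simp only [map_mul] at hh; exact hh
    have hre5c : conj r5 * conj e' = conj e := by
      have hh := congrArg conj hre5; simp only [map_mul] at hh; exact hh
    have hre6c : conj r6 * conj f' = conj f := by
      have hh := congrArg conj hre6; simp only [map_mul] at hh; exact hh
    set lam : Fin 4 → ℂ := ![σ, conj r1 / σ, conj r2 / σ, conj r3 / σ] with hlam_def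
    have hlam0 : lam 0 = σ := by rw [hlam_def]; rfl
    have hlam1 : lam 1 = conj r1 / σ := by rw [hlam_def]; rfl
    have hlam2 : lam 2 = conj r2 / σ := by rw [hlam_def]; rfl
    have hlam3 : lam 3 = conj r3 / σ := by rw [hlam_def]; rfl
    have hlamne : ∀ j, lam j ≠ 0 := by
      have k0 : lam 0 ≠ 0 := by rw [hlam0]; exact hσne
      have k1 : lam 1 ≠ 0 := by rw [hlam1]; exact div_ne_zero (conj_ne hnr1) hσne
      have k2 : lam 2 ≠ 0 := by rw [hlam2]; exact div_ne_zero (conj_ne hnr2) hσne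
      have k3 : lam 3 ≠ 0 := by rw [hlam3]; exact div_ne_zero (conj_ne hnr3) hσne
      intro j
      fin_cases j
      · exact k0
      · exact k1
      · exact k2
      · exact k3
    have hclam0 : conj (lam 0) = σ := by rw [hlam0]; exact hσc
    have hclam1 : conj (lam 1) = r1 / σ := by rw [hlam1, map_div₀, conj_conj, hσc]
    have hclam2 : conj (lam 2) = r2 / σ := by rw [hlam2, map_div₀, conj_conj, hσc]
    have hclam3 : conj (lam 3) = r3 / σ := by rw [hlam3, map_div₀, conj_conj, hσc]
    set q : Fin 4 → Fin 3 → ℂ := fun j => lam j • p' j with hq_def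
    have hg00 : herm (q 0) (q 0) = herm (p 0) (p 0) := by
      rw [show herm (q 0) (q 0) = lam 0 * conj (lam 0) * herm (p' 0) (p' 0) from herm_smul_smul _ _ _ _]
      rw [hlam0, h00', h00, mul_zero]
    have hg01 : herm (q 0) (q 1) = herm (p 0) (p 1) := by
      rw [show herm (q 0) (q 1) = lam 0 * conj (lam 1) * herm (p' 0) (p' 1) from herm_smul_smul _ _ _ _]
      rw [hlam0, hclam1, ← ha_def, ← ha'_def,
        mul_comm σ (r1 / σ), div_mul_cancel₀ _ hσne]
      exact hre1
    have hg02 : herm (q 0) (q 2) = herm (p 0) (p 2) := by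
      rw [show herm (q 0) (q 2) = lam 0 * conj (lam 2) * herm (p' 0) (p' 2) from herm_smul_smul _ _ _ _]
      rw [hlam0, hclam2, ← hb_def, ← hb'_def,
        mul_comm σ (r2 / σ), div_mul_cancel₀ _ hσne]
      exact hre2
    have hg03 : herm (q 0) (q 3) = herm (p 0) (p 3) := by
      rw [show herm (q 0) (q 3) = lam 0 * conj (lam 3) * herm (p' 0) (p' 3) from herm_smul_smul _ _ _ _]
      rw [hlam0, hclam3, ← hc_def, ← hc'_def,
        mul_comm σ (r3 / σ), div_mul_cancel₀ _ hσne]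
      exact hre3
    have hg10 : herm (q 1) (q 0) = herm (p 1) (p 0) := by
      rw [show herm (q 1) (q 0) = lam 1 * conj (lam 0) * herm (p' 1) (p' 0) from herm_smul_smul _ _ _ _]
      rw [hlam1, hclam0, herm_swap (p' 0) (p' 1), herm_swap (p 0) (p 1),
        ← ha_def, ← ha'_def, div_mul_cancel₀ _ hσne]
      exact hre1c
    have hg11 : herm (q 1) (q 1) = herm (p 1) (p 1) := by
      rw [show herm (q 1) (q 1) = lam 1 * conj (lam 1) * herm (p' 1) (p' 1) from herm_smul_smul _ _ _ _]
      rw [hlam1, h11', h11, mul_zero]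
    have hg12 : herm (q 1) (q 2) = herm (p 1) (p 2) := by
      rw [show herm (q 1) (q 2) = lam 1 * conj (lam 2) * herm (p' 1) (p' 2) from herm_smul_smul _ _ _ _]
      rw [hlam1, hclam2, ← hd_def, ← hd'_def, div_mul_div_comm, hσ2]
      exact helper_pair hs0reC hS1 hre4
    have hg13 : herm (q 1) (q 3) = herm (p 1) (p 3) := by
      rw [show herm (q 1) (q 3) = lam 1 * conj (lam 3) * herm (p' 1) (p' 3) from herm_smul_smul _ _ _ _]
      rw [hlam1, hclam3, ← he_def, ← he'_def, div_mul_div_comm, hσ2]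
      exact helper_pair hs0reC hS2 hre5
    have hg20 : herm (q 2) (q 0) = herm (p 2) (p 0) := by
      rw [show herm (q 2) (q 0) = lam 2 * conj (lam 0) * herm (p' 2) (p' 0) from herm_smul_smul _ _ _ _]
      rw [hlam2, hclam0, herm_swap (p' 0) (p' 2), herm_swap (p 0) (p 2),
        ← hb_def, ← hb'_def, div_mul_cancel₀ _ hσne]
      exact hre2c
    have hg21 : herm (q 2) (q 1) = herm (p 2) (p 1) := by
      rw [show herm (q 2) (q 1) = lam 2 * conj (lam 1) * herm (p' 2) (p' 1) from herm_smul_smul _ _ _ _]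
      rw [hlam2, hclam1, herm_swap (p' 1) (p' 2), herm_swap (p 1) (p 2),
        ← hd_def, ← hd'_def, div_mul_div_comm, hσ2]
      exact helper_pair hs0reC hS1c hre4c
    have hg22 : herm (q 2) (q 2) = herm (p 2) (p 2) := by
      rw [show herm (q 2) (q 2) = lam 2 * conj (lam 2) * herm (p' 2) (p' 2) from herm_smul_smul _ _ _ _]
      rw [hlam2, h22', h22, mul_zero]
    have hg23 : herm (q 2) (q 3) = herm (p 2) (p 3) := by
      rw [show herm (q 2) (q 3) = lam 2 * conj (lam 3) * herm (p' 2) (p' 3) from herm_smul_smul _ _ _ _]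
      rw [hlam2, hclam3, ← hf_def, ← hf'_def, div_mul_div_comm, hσ2]
      exact helper_pair hs0reC hS3 hre6
    have hg30 : herm (q 3) (q 0) = herm (p 3) (p 0) := by
      rw [show herm (q 3) (q 0) = lam 3 * conj (lam 0) * herm (p' 3) (p' 0) from herm_smul_smul _ _ _ _]
      rw [hlam3, hclam0, herm_swap (p' 0) (p' 3), herm_swap (p 0) (p 3),
        ← hc_def, ← hc'_def, div_mul_cancel₀ _ hσne]
      exact hre3c
    have hg31 : herm (q 3) (q 1) = herm (p 3) (p 1) := by
      rw [show herm (q 3) (q 1) = lam 3 * conj (lam 1) * herm (p' 3) (p' 1) from herm_smul_smul _ _ _ _]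
      rw [hlam3, hclam1, herm_swap (p' 1) (p' 3), herm_swap (p 1) (p 3),
        ← he_def, ← he'_def, div_mul_div_comm, hσ2]
      exact helper_pair hs0reC hS2c hre5c
    have hg32 : herm (q 3) (q 2) = herm (p 3) (p 2) := by
      rw [show herm (q 3) (q 2) = lam 3 * conj (lam 2) * herm (p' 3) (p' 2) from herm_smul_smul _ _ _ _]
      rw [hlam3, hclam2, herm_swap (p' 2) (p' 3), herm_swap (p 2) (p 3),
        ← hf_def, ← hf'_def, div_mul_div_comm, hσ2]
      exact helper_pair hs0reC hS3c hre6c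
    have hg33 : herm (q 3) (q 3) = herm (p 3) (p 3) := by
      rw [show herm (q 3) (q 3) = lam 3 * conj (lam 3) * herm (p' 3) (p' 3) from herm_smul_smul _ _ _ _]
      rw [hlam3, h33', h33, mul_zero]
    have hgram : ∀ i j, herm (q i) (q j) = herm (p i) (p j) := by
      intro i j
      fin_cases i <;> fin_cases j
      · exact hg00
      · exact hg01
      · exact hg02
      · exact hg03
      · exact hg10
      · exact hg11
      · exact hg12
      · exact hg13
      · exact hg20
      · exact hg21
      · exact hg22
      · exact hg23
      · exact hg30
      · exact hg31
      · exact hg32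
      · exact hg33
    have hspanq : Submodule.span ℂ (Set.range q) = ⊤ := by
      rw [eq_top_iff, ← hspan']
      apply Submodule.span_le.2
      rintro _ ⟨j, rfl⟩
      have hpj : p' j = (lam j)⁻¹ • q j := by
        have hq : q j = lam j • p' j := rfl
        rw [hq, smul_smul, inv_mul_cancel₀ (hlamne j), one_smul]
      rw [hpj]
      exact Submodule.smul_mem _ _ (Submodule.subset_span ⟨j, rfl⟩)
    obtain ⟨g, hpres, hgq⟩ := exists_equiv p q hspan hspanq hgram
    exact ⟨g, hpres, lam, hlamne, fun j => hgq j⟩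
end
end

section
/- Define F : ℂ³ → ℝ² by F(x₁,x₂,x₃) = (|x₂|² − |x₁|²·|x₃|², |x₁|² + |x₂|² − 2·Re(x₁+x₂) + 1 − 2·|x₁|²·Re(x₃)). Then for every point p = (x₁,x₂,x₃) of 𝔛, the real Fréchet derivative of F at p is a surjective ℝ-linear map onto ℝ² if and only if p ∉ 𝔛_ℝ. (Consequently 𝔛 ∖ 𝔛_ℝ is a 4-dimensional smooth real submanifold of ℂ³.) -/
noncomputable section

open Complex ContinuousLinearMap

/-- The real singular set 𝔛_ℝ. -/
def memXR (x₁ x₂ x₃ : ℂ) : Prop :=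
  memX x₁ x₂ x₃ ∧ x₁.im = 0 ∧ x₂.im = 0 ∧ x₃.im = 0 ∧
  x₁ + x₂ = 1 ∧ 1 / x₂ + 1 / x₃ = 1 ∧ x₃ + 1 / x₁ = 1

/-- The pair of real defining functions of 𝔛. -/
def Fdef (x : ℂ × ℂ × ℂ) : ℝ × ℝ :=
  ((‖x.2.1‖) ^ 2 - (‖x.1‖) ^ 2 * (‖x.2.2‖) ^ 2,
   (‖x.1‖) ^ 2 + (‖x.2.1‖) ^ 2 - 2 * (x.1 + x.2.1).re + 1
     - 2 * (‖x.1‖) ^ 2 * x.2.2.re)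

lemma fderiv_Fdef_apply (p q : ℂ × ℂ × ℂ) :
    fderiv ℝ Fdef p q =
      (2*(p.2.1.re*q.2.1.re + p.2.1.im*q.2.1.im)
         - 2*(p.2.2.re*p.2.2.re + p.2.2.im*p.2.2.im)*(p.1.re*q.1.re + p.1.im*q.1.im)
         - 2*(p.1.re*p.1.re + p.1.im*p.1.im)*(p.2.2.re*q.2.2.re + p.2.2.im*q.2.2.im),
       2*(p.1.re*q.1.re + p.1.im*q.1.im) + 2*(p.2.1.re*q.2.1.re + p.2.1.im*q.2.1.im)
         - 2*(q.1.re + q.2.1.re)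
         - 4*p.2.2.re*(p.1.re*q.1.re + p.1.im*q.1.im)
         - 2*(p.1.re*p.1.re + p.1.im*p.1.im)*q.2.2.re) := by
  have hA : HasFDerivAt (fun x : ℂ × ℂ × ℂ => x.1) (fst ℝ ℂ (ℂ × ℂ)) p := hasFDerivAt_fst
  have hB : HasFDerivAt (fun x : ℂ × ℂ × ℂ => x.2.1)
      ((fst ℝ ℂ ℂ).comp (snd ℝ ℂ (ℂ × ℂ))) p := hasFDerivAt_fst.comp p hasFDerivAt_snd
  have hC : HasFDerivAt (fun x : ℂ × ℂ × ℂ => x.2.2)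
      ((snd ℝ ℂ ℂ).comp (snd ℝ ℂ (ℂ × ℂ))) p := hasFDerivAt_snd.comp p hasFDerivAt_snd
  have hra := Complex.reCLM.hasFDerivAt.comp p hA
  have hia := Complex.imCLM.hasFDerivAt.comp p hA
  have hrb := Complex.reCLM.hasFDerivAt.comp p hB
  have hib := Complex.imCLM.hasFDerivAt.comp p hB
  have hrc := Complex.reCLM.hasFDerivAt.comp p hC
  have hic := Complex.imCLM.hasFDerivAt.comp p hC
  have hNa := (hra.mul hra).add (hia.mul hia)
  have hNb := (hrb.mul hrb).add (hib.mul hib)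
  have hNc := (hrc.mul hrc).add (hic.mul hic)
  have hF1 := hNb.sub (hNa.mul hNc)
  have hF2 := (((hNa.add hNb).sub ((hra.add hrb).const_mul 2)).add_const 1).sub
      ((hNa.const_mul 2).mul hrc)
  have hF := hF1.prodMk hF2
  have hFdef : HasFDerivAt Fdef _ p := hF.congr_of_eventuallyEq <|
    Filter.Eventually.of_forall fun x => by
      simp only [Fdef, Complex.sq_norm, Complex.normSq_apply, Complex.add_re,
        Function.comp_apply, Complex.reCLM_apply, Complex.imCLM_apply, Prod.mk.injEq,
        Pi.add_apply, Pi.sub_apply, Pi.mul_apply, Pi.pow_apply]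
  rw [hFdef.fderiv]
  simp only [ContinuousLinearMap.prod_apply, ContinuousLinearMap.add_apply,
    ContinuousLinearMap.sub_apply, ContinuousLinearMap.smul_apply,
    ContinuousLinearMap.coe_comp', Function.comp_apply, ContinuousLinearMap.coe_fst',
    ContinuousLinearMap.coe_snd', Complex.reCLM_apply, Complex.imCLM_apply,
    ContinuousLinearMap.coe_smul', Pi.smul_apply, smul_eq_mul, Prod.mk.injEq,
    Pi.add_apply, Pi.sub_apply, Pi.mul_apply, Pi.pow_apply]
  constructor <;> ring

lemma surjective_of_det {E : Type*} [NormedAddCommGroup E] [NormedSpace ℝ E]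
    (L : E →L[ℝ] ℝ × ℝ) (u v : E)
    (h : (L u).1 * (L v).2 - (L u).2 * (L v).1 ≠ 0) : Function.Surjective L := by
  intro y
  refine ⟨((y.1*(L v).2 - y.2*(L v).1)/((L u).1*(L v).2 - (L u).2*(L v).1)) • u +
          ((y.2*(L u).1 - y.1*(L u).2)/((L u).1*(L v).2 - (L u).2*(L v).1)) • v, ?_⟩
  rw [map_add, map_smul, map_smul, Prod.ext_iff]
  constructor
  · simp only [Prod.fst_add, Prod.smul_fst, smul_eq_mul]
    rw [div_mul_eq_mul_div, div_mul_eq_mul_div, ← add_div, div_eq_iff h]; ring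
  · simp only [Prod.snd_add, Prod.smul_snd, smul_eq_mul]
    rw [div_mul_eq_mul_div, div_mul_eq_mul_div, ← add_div, div_eq_iff h]; ring

/-- At a point of 𝔛, the real Fréchet derivative of the defining map `Fdef` is
surjective onto ℝ² if and only if the point does not lie in the real singular
set 𝔛_ℝ. -/
theorem fderiv_surjective_iff_not_memXR (p : ℂ × ℂ × ℂ)
    (hp : memX p.1 p.2.1 p.2.2) :
    Function.Surjective (fderiv ℝ Fdef p) ↔ ¬ memXR p.1 p.2.1 p.2.2 := by
  obtain ⟨a, b, c⟩ := p
  simp only at hp ⊢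
  obtain ⟨ha0, hb0, hc0, -, -⟩ := id hp
  have hNa : 0 < a.re * a.re + a.im * a.im := by
    have := Complex.normSq_pos.mpr ha0
    rwa [Complex.normSq_apply] at this
  constructor
  · -- Surjective → ¬ memXR
    rintro hs ⟨-, hia, hib, hic, hab, hbc, hca⟩
    -- real relations
    have hbcr : b.re + c.re = b.re * c.re := by
      have h1 : c + b = b * c := by field_simp at hbc; linear_combination hbc
      have h2 := congrArg Complex.re h1
      simp only [Complex.add_re, Complex.mul_re, hib, hic] at h2
      linarith [h2]
    have hcar : c.re * a.re + 1 = a.re := by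
      have h1 : c * a + 1 = a := by field_simp at hca; linear_combination hca
      have h2 := congrArg Complex.re h1
      simp only [Complex.add_re, Complex.mul_re, Complex.one_re, hia, hic] at h2
      linarith [h2]
    have hcre : c.re ≠ 0 := fun h => hc0 (Complex.ext h hic)
    obtain ⟨q, hq⟩ := hs (0, 1)
    rw [fderiv_Fdef_apply] at hq
    simp only [Prod.mk.injEq] at hq
    obtain ⟨h1, h2⟩ := hq
    -- c.re * J2 = J1, with J1 = 0, J2 = 1 gives c.re = 0
    apply hcre
    have : c.re * (2*(a.re*q.1.re + a.im*q.1.im) + 2*(b.re*q.2.1.re + b.im*q.2.1.im)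
         - 2*(q.1.re + q.2.1.re) - 4*c.re*(a.re*q.1.re + a.im*q.1.im)
         - 2*(a.re*a.re + a.im*a.im)*q.2.2.re)
        = (2*(b.re*q.2.1.re + b.im*q.2.1.im)
         - 2*(c.re*c.re + c.im*c.im)*(a.re*q.1.re + a.im*q.1.im)
         - 2*(a.re*a.re + a.im*a.im)*(c.re*q.2.2.re + c.im*q.2.2.im)) := by
      rw [hia, hib, hic]
      linear_combination (-2*q.2.1.re) * hbcr + (-2*c.re*q.1.re) * hcar
    rw [h1, h2] at this
    linarith
  · -- ¬ memXR → Surjective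
    intro hnXR
    by_contra hns
    apply hnXR
    have hdet : ∀ u v : ℂ × ℂ × ℂ,
        ((fderiv ℝ Fdef (a,b,c)) u).1 * ((fderiv ℝ Fdef (a,b,c)) v).2
          - ((fderiv ℝ Fdef (a,b,c)) u).2 * ((fderiv ℝ Fdef (a,b,c)) v).1 = 0 := by
      intro u v
      by_contra h
      exact hns (surjective_of_det _ u v h)
    have d56 := hdet ((0:ℂ),(0:ℂ),(1:ℂ)) ((0:ℂ),(0:ℂ),Complex.I)
    have d35 := hdet ((0:ℂ),(1:ℂ),(0:ℂ)) ((0:ℂ),(0:ℂ),(1:ℂ))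
    have d45 := hdet ((0:ℂ),Complex.I,(0:ℂ)) ((0:ℂ),(0:ℂ),(1:ℂ))
    have d25 := hdet (Complex.I,(0:ℂ),(0:ℂ)) ((0:ℂ),(0:ℂ),(1:ℂ))
    have d15 := hdet ((1:ℂ),(0:ℂ),(0:ℂ)) ((0:ℂ),(0:ℂ),(1:ℂ))
    rw [fderiv_Fdef_apply, fderiv_Fdef_apply] at d56 d35 d45 d25 d15
    simp only [Complex.one_re, Complex.one_im, Complex.zero_re, Complex.zero_im,
      Complex.I_re, Complex.I_im] at d56 d35 d45 d25 d15
    have hNa' : a.re * a.re + a.im * a.im ≠ 0 := ne_of_gt hNa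
    -- c.im = 0
    have hic : c.im = 0 := by
      have h : (a.re * a.re + a.im * a.im) * ((a.re * a.re + a.im * a.im) * c.im) = 0 := by
        linear_combination (-(1:ℝ)/4) * d56
      have h' := (mul_eq_zero.mp h).resolve_left hNa'
      exact (mul_eq_zero.mp h').resolve_left hNa'
    -- b relation
    have hb_rel : b.re + c.re = b.re * c.re := by
      have h : (a.re * a.re + a.im * a.im) * (b.re + c.re - b.re * c.re) = 0 := by
        linear_combination (-(1:ℝ)/4) * d35
      have h' := (mul_eq_zero.mp h).resolve_left hNa'
      linarith [h']
    have hc_ne1 : c.re ≠ 1 := by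
      intro h
      rw [h, mul_one] at hb_rel
      linarith
    have h1c : (1:ℝ) - c.re ≠ 0 := sub_ne_zero.mpr (Ne.symm hc_ne1)
    have hcre : c.re ≠ 0 := fun h => hc0 (Complex.ext h hic)
    -- b.im = 0
    have hib : b.im = 0 := by
      have h : (a.re * a.re + a.im * a.im) * ((1 - c.re) * b.im) = 0 := by
        linear_combination (-(1:ℝ)/4) * d45
      have h' := (mul_eq_zero.mp h).resolve_left hNa'
      exact (mul_eq_zero.mp h').resolve_left h1c
    rw [hic] at d25 d15
    -- a.im = 0
    have hia : a.im = 0 := by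
      have h : (a.re * a.re + a.im * a.im) * (c.re * ((1 - c.re) * a.im)) = 0 := by
        linear_combination ((1:ℝ)/4) * d25
      have h' := (mul_eq_zero.mp h).resolve_left hNa'
      have h'' := (mul_eq_zero.mp h').resolve_left hcre
      exact (mul_eq_zero.mp h'').resolve_left h1c
    -- a relation
    have ha_rel : a.re - c.re * a.re - 1 = 0 := by
      have h : (a.re * a.re + a.im * a.im) * (c.re * (a.re - c.re * a.re - 1)) = 0 := by
        linear_combination ((1:ℝ)/4) * d15
      have h' := (mul_eq_zero.mp h).resolve_left hNa'
      exact (mul_eq_zero.mp h').resolve_left hcre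
    refine ⟨hp, hia, hib, hic, ?_, ?_, ?_⟩
    · -- a + b = 1
      apply Complex.ext
      · simp only [Complex.add_re, Complex.one_re]
        have : (a.re + b.re) * (1 - c.re) = 1 * (1 - c.re) := by
          linear_combination ha_rel + hb_rel
        exact mul_right_cancel₀ h1c this
      · simp [Complex.add_im, hia, hib]
    · -- 1/b + 1/c = 1
      have h1 : c + b = b * c := by
        apply Complex.ext
        · simp only [Complex.add_re, Complex.mul_re, hib, hic]
          linear_combination hb_rel
        · simp [Complex.add_im, Complex.mul_im, hib, hic]
      field_simp
      linear_combination h1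
    · -- c + 1/a = 1
      have h2 : c * a + 1 = a := by
        apply Complex.ext
        · simp only [Complex.add_re, Complex.mul_re, Complex.one_re, hia, hic]
          linear_combination -ha_rel
        · simp [Complex.add_im, Complex.mul_im, Complex.one_im, hia, hic]
      field_simp
      linear_combination h2
end
end

section
/- For every (x₁,x₂,x₃) ∈ 𝔛 the symmetric condition (1/x₁)·D₂₃ − (1/x₂)·D₃₁ + (1/x₃)·D₁₂ = 0 holds. -/
noncomputable section

open Complex ComplexConjugate

/-- The minor `D₂₃`. -/
def D23 (x₁ x₂ x₃ : ℂ) : ℂ :=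
  (((‖x₂‖) ^ 2 : ℝ) / ((‖x₃‖) ^ 2 : ℝ) : ℝ) *
    (conj x₂ * conj x₃ - conj x₂ - conj x₃)

/-- The minor `D₃₁`. -/
def D31 (x₁ x₂ x₃ : ℂ) : ℂ :=
  conj x₃ * (((‖x₁‖) ^ 2 : ℝ) : ℂ) * (1 + conj x₁ * conj x₃ - conj x₁)

/-- The minor `D₁₂`. -/
def D12 (x₁ x₂ x₃ : ℂ) : ℂ :=
  (conj x₂ / x₁) * (1 - conj x₁ - conj x₂)

/-- The symmetric condition satisfied by the minors on 𝔛. -/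
theorem symmetric_condition (x₁ x₂ x₃ : ℂ) (hx : memX x₁ x₂ x₃) :
    (1 / x₁) * D23 x₁ x₂ x₃ - (1 / x₂) * D31 x₁ x₂ x₃ + (1 / x₃) * D12 x₁ x₂ x₃ = 0 := by
  obtain ⟨h1, h2, h3, habs, hre⟩ := hx
  unfold D23 D31 D12
  have c1 : conj x₁ ≠ 0 := by simpa using h1
  have c2 : conj x₂ ≠ 0 := by simpa using h2
  have c3 : conj x₃ ≠ 0 := by simpa using h3
  have E1 : x₂ * conj x₂ = (x₁ * conj x₁) * (x₃ * conj x₃) := by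
    rw [Complex.mul_conj, Complex.mul_conj, Complex.mul_conj]
    have : Complex.normSq x₂ = Complex.normSq x₁ * Complex.normSq x₃ := by
      rw [← Complex.sq_norm, ← Complex.sq_norm, ← Complex.sq_norm, habs]; ring
    exact_mod_cast this
  have E2 : (x₁ * conj x₁) * (x₃ + conj x₃) =
      x₁ * conj x₁ + x₂ * conj x₂ - (x₁ + conj x₁) - (x₂ + conj x₂) + 1 := by
    rw [Complex.mul_conj, Complex.mul_conj, Complex.add_conj, Complex.add_conj,
      Complex.add_conj]
    have h : Complex.normSq x₁ * (2 * x₃.re) =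
        Complex.normSq x₁ + Complex.normSq x₂ - 2 * x₁.re - 2 * x₂.re + 1 := by
      rw [← Complex.sq_norm, ← Complex.sq_norm]; linarith [hre]
    exact_mod_cast h
  rw [show (((‖x₂‖) ^ 2 : ℝ) / ((‖x₃‖) ^ 2 : ℝ) : ℝ) =
      (Complex.normSq x₂ / Complex.normSq x₃ : ℝ) by rw [Complex.sq_norm, Complex.sq_norm],
    show (((‖x₁‖) ^ 2 : ℝ) : ℂ) = x₁ * conj x₁ by
      rw [Complex.sq_norm]; exact (Complex.mul_conj x₁).symm]
  push_cast
  rw [← Complex.mul_conj x₂, ← Complex.mul_conj x₃]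
  field_simp
  linear_combination (x₁*conj x₃*(1 + conj x₃*conj x₁ - conj x₁) - x₂*conj x₂) * E1
      - x₂*conj x₂*conj x₃ * E2
end
end

section
/- Let (x₁,x₂,x₃) ∈ 𝔛 with Im(x₃) ≠ 0 and x₁ + x₂ ≠ 1. Set z = (x₁ + x₂/x₃)/(x₁ + x₂ − 1), w = x₃ (the holomorphic coordinates of the point), and z' = (x₁ + x₂/conj(x₃))/(x₁ + x₂ − 1), w' = conj(x₃) (the coordinates of its image under the involution 𝒯(x₁,x₂,x₃) = (x₁,x₂,conj(x₃))). Then z'·conj(w·z) = 1 and w' = conj(w); in particular w·z ≠ 0 and in these coordinates 𝒯 is the antiholomorphic map (z,w) ↦ (1/conj(w·z), conj(w)). -/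
noncomputable section

open Complex ComplexConjugate

/-- In the holomorphic coordinates `z = (x₁ + x₂/x₃)/(x₁ + x₂ − 1)`, `w = x₃`,
the involution `𝒯(x₁,x₂,x₃) = (x₁,x₂,conj x₃)` is the antiholomorphic map
`(z,w) ↦ (1/conj(w·z), conj w)`. -/
theorem involution_coordinate_expression (x₁ x₂ x₃ : ℂ)
    (hx : memX x₁ x₂ x₃) (hIm : x₃.im ≠ 0) (hsum : x₁ + x₂ ≠ 1)
    (z w z' w' : ℂ)
    (hz : z = (x₁ + x₂ / x₃) / (x₁ + x₂ - 1))
    (hw : w = x₃)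
    (hz' : z' = (x₁ + x₂ / conj x₃) / (x₁ + x₂ - 1))
    (hw' : w' = conj x₃) :
    z' * conj (w * z) = 1 ∧ w' = conj w ∧ w * z ≠ 0 := by
  obtain ⟨h1, h2, h3, habs, hre⟩ := hx
  have hd : x₁ + x₂ - 1 ≠ 0 := sub_ne_zero.mpr hsum
  have hcd : conj x₁ + conj x₂ - 1 ≠ 0 := by
    have := (map_ne_zero (starRingEnd ℂ)).mpr hd
    simpa [map_sub, map_add] using this
  have hc3 : conj x₃ ≠ 0 := (map_ne_zero (starRingEnd ℂ)).mpr h3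
  -- complexified hypotheses
  have H2 : x₂ * conj x₂ = (x₁ * conj x₁) * (x₃ * conj x₃) := by
    have h := congrArg (fun r : ℝ => ((r ^ 2 : ℝ) : ℂ)) habs
    simp only [mul_pow, Complex.sq_norm, Complex.ofReal_mul] at h
    rw [Complex.mul_conj, Complex.mul_conj, Complex.mul_conj]
    exact h
  have H3 : x₁ * conj x₁ * (x₃ + conj x₃) =
      x₁ * conj x₁ + x₂ * conj x₂ - (x₁ + conj x₁) - (x₂ + conj x₂) + 1 := by
    rw [Complex.sq_norm, Complex.sq_norm] at hre
    have hc := congrArg (fun r : ℝ => (r : ℂ)) hre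
    simp only [Complex.ofReal_add, Complex.ofReal_sub, Complex.ofReal_mul,
      Complex.ofReal_one, Complex.ofReal_ofNat] at hc
    rw [Complex.mul_conj, Complex.mul_conj, Complex.add_conj, Complex.add_conj,
      Complex.add_conj]
    push_cast
    push_cast at hc
    linear_combination hc
  have num : (x₁ * conj x₃ + x₂) * (conj x₁ * conj x₃ + conj x₂) =
      conj x₃ * ((x₁ + x₂ - 1) * (conj x₁ + conj x₂ - 1)) := by
    linear_combination (conj x₃) * H3 + H2
  have key : ((x₁ + x₂ / conj x₃) / (x₁ + x₂ - 1)) *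
      conj (x₃ * ((x₁ + x₂ / x₃) / (x₁ + x₂ - 1))) = 1 := by
    simp only [map_mul, map_div₀, map_add, map_sub, map_one, Complex.conj_conj]
    have e : (x₁ + x₂ / conj x₃) / (x₁ + x₂ - 1) *
        (conj x₃ * ((conj x₁ + conj x₂ / conj x₃) / (conj x₁ + conj x₂ - 1))) =
        ((x₁ * conj x₃ + x₂) * (conj x₁ * conj x₃ + conj x₂)) /
          (conj x₃ * ((x₁ + x₂ - 1) * (conj x₁ + conj x₂ - 1))) := by
      field_simp
    rw [e, num, div_self (mul_ne_zero hc3 (mul_ne_zero hd hcd))]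
  have key' : z' * conj (w * z) = 1 := by rw [hz', hw, hz]; exact key
  refine ⟨key', by rw [hw', hw], ?_⟩
  intro h0
  rw [h0, map_zero, mul_zero] at key'
  exact one_ne_zero key'.symm
end
end

section
/- Let ζ₁, ζ₂ ∈ ℂ be nonzero and suppose (|ζ₁| − |ζ₂|)² = 2·Re(ζ₁) + 2·Re(ζ₂) − 1 (i.e. (ζ₁,ζ₂) lies on the boundary hypersurface of the domain 𝒫). Then |ζ₁|·|ζ₂| + Re(ζ₁·conj(ζ₂)) = 0 if and only if ζ₁ + ζ₂ = 1; consequently, if ζ₁ + ζ₂ ≠ 1, the Levi form L(ζ₁,ζ₂) = 1 + Re(ζ₁·conj(ζ₂))/(|ζ₁|·|ζ₂|) is strictly positive, so the boundary of 𝒫 is Levi strictly pseudoconvex away from the set {ζ₁, ζ₂ real, ζ₁ + ζ₂ = 1}. -/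
noncomputable section

open Complex ComplexConjugate

/-- On the boundary hypersurface of the domain 𝒫, the Levi form
`L = 1 + Re(ζ₁·conj ζ₂)/(|ζ₁|·|ζ₂|)` vanishes exactly on the line
`ζ₁ + ζ₂ = 1`, and is strictly positive elsewhere. -/
theorem levi_strictly_pseudoconvex (ζ₁ ζ₂ : ℂ) (h₁ : ζ₁ ≠ 0) (h₂ : ζ₂ ≠ 0)
    (hbd : (norm ζ₁ - norm ζ₂) ^ 2 = 2 * ζ₁.re + 2 * ζ₂.re - 1) :
    (norm ζ₁ * norm ζ₂ + (ζ₁ * conj ζ₂).re = 0 ↔ ζ₁ + ζ₂ = 1) ∧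
    (ζ₁ + ζ₂ ≠ 1 →
      0 < 1 + (ζ₁ * conj ζ₂).re / (norm ζ₁ * norm ζ₂)) := by
  have ha : 0 < norm ζ₁ := norm_pos_iff.mpr h₁
  have hb : 0 < norm ζ₂ := norm_pos_iff.mpr h₂
  have h1 : norm ζ₁ ^ 2 = Complex.normSq ζ₁ := Complex.sq_norm ζ₁
  have h2 : norm ζ₂ ^ 2 = Complex.normSq ζ₂ := Complex.sq_norm ζ₂
  have key : 2 * (norm ζ₁ * norm ζ₂ + (ζ₁ * conj ζ₂).re)
      = Complex.normSq (ζ₁ + ζ₂ - 1) := by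
    simp only [Complex.normSq_apply, Complex.mul_re, Complex.conj_re, Complex.conj_im,
      Complex.add_re, Complex.add_im, Complex.sub_re, Complex.sub_im,
      Complex.one_re, Complex.one_im] at h1 h2 ⊢
    nlinarith [hbd, h1, h2]
  constructor
  · constructor
    · intro h
      have : Complex.normSq (ζ₁ + ζ₂ - 1) = 0 := by linarith
      have := Complex.normSq_eq_zero.mp this
      linear_combination this
    · intro h
      have : ζ₁ + ζ₂ - 1 = 0 := by rw [h]; ring
      rw [this] at key
      rw [map_zero] at key
      linarith
  · intro hne
    have hne' : ζ₁ + ζ₂ - 1 ≠ 0 := sub_ne_zero.mpr hne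
    have hsq : 0 < Complex.normSq (ζ₁ + ζ₂ - 1) := Complex.normSq_pos.mpr hne'
    have hpos : 0 < norm ζ₁ * norm ζ₂ + (ζ₁ * conj ζ₂).re := by linarith
    have hab : 0 < norm ζ₁ * norm ζ₂ := mul_pos ha hb
    have : 1 + (ζ₁ * conj ζ₂).re / (norm ζ₁ * norm ζ₂)
        = (norm ζ₁ * norm ζ₂ + (ζ₁ * conj ζ₂).re)
          / (norm ζ₁ * norm ζ₂) := by
      field_simp
    rw [this]
    exact div_pos hpos hab
end
end
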